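/- arXiv:1401.1434 — 6 statements merged into one kernel-verified Lean document; each statement's English description precedes it below -/
import Mathlib

section
/- Let p ∈ ℕ with p ≥ 1 and k ∈ ℕ. For each i ∈ {1,…,k} let P_i, Q_i ⊆ ℝ² be nonempty compact convex sets (polytopes) with Q_i ⊆ P_i, and let P := P_1 × ⋯ × P_k and Q := Q_1 × ⋯ × Q_k, viewed as subsets of ℝ^{2k} equipped with the ℓ_p-norm. Then δ_p(P,Q)^p = Σ_{i=1}^k δ_p(P_i,Q_i)^p, where on each factor ℝ² the ℓ_p-norm is used as well. -/
open scoped ENNReal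

open Metric Set

set_option maxHeartbeats 1000000 in
/-- **Hausdorff distance of certain direct products.**
For `p ≥ 1` and nonempty compact convex sets `Qᵢ ⊆ Pᵢ ⊆ ℝ²` (with the `ℓ_p`-norm on `ℝ²`),
the Hausdorff distance (w.r.t. the `ℓ_p`-norm on `ℝ^{2k} = ℝ² × ⋯ × ℝ²`) of the products
`P = P₁ × ⋯ × P_k` and `Q = Q₁ × ⋯ × Q_k` satisfies
`δ_p(P,Q)^p = ∑ i, δ_p(Pᵢ,Qᵢ)^p`. -/
theorem hausdorffDist_pow_prod_of_subsets
    (p : ℕ) (hp : 1 ≤ p) [Fact (1 ≤ (p : ℝ≥0∞))] (k : ℕ)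
    (Ps Qs : Fin k → Set (PiLp (p : ℝ≥0∞) (fun _ : Fin 2 => ℝ)))
    (hPne : ∀ i, (Ps i).Nonempty) (hQne : ∀ i, (Qs i).Nonempty)
    (hPc : ∀ i, IsCompact (Ps i)) (hQc : ∀ i, IsCompact (Qs i))
    (hPconv : ∀ i, Convex ℝ (Ps i)) (hQconv : ∀ i, Convex ℝ (Qs i))
    (hsub : ∀ i, Qs i ⊆ Ps i)
    (P Q : Set (PiLp (p : ℝ≥0∞) (fun _ : Fin k => PiLp (p : ℝ≥0∞) (fun _ : Fin 2 => ℝ))))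
    (hP : P = {x | ∀ i, x i ∈ Ps i}) (hQ : Q = {x | ∀ i, x i ∈ Qs i}) :
    Metric.hausdorffDist P Q ^ p = ∑ i, Metric.hausdorffDist (Ps i) (Qs i) ^ p := by
  have hp0 : (p : ℝ) ≠ 0 := by positivity
  have hppos : (0:ℝ) < p := by positivity
  have htr : ((p : ℝ≥0∞)).toReal = (p : ℝ) := by simp
  have htrpos : (0:ℝ) < ((p : ℝ≥0∞)).toReal := by rw [htr]; exact hppos
  -- the p-th power of the distance in a PiLp space is the sum of p-th powers
  have hdist : ∀ (x y : PiLp (p : ℝ≥0∞) (fun _ : Fin k => PiLp (p : ℝ≥0∞) (fun _ : Fin 2 => ℝ))),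
      dist x y ^ p = ∑ i, dist (x i) (y i) ^ p := by
    intro x y
    have h1 : dist x y = (∑ i, dist (x i) (y i) ^ (p:ℝ)) ^ (1 / (p:ℝ)) := by
      rw [PiLp.dist_eq_sum htrpos, htr]
    have hsnn : (0:ℝ) ≤ ∑ i, dist (x i) (y i) ^ (p:ℝ) :=
      Finset.sum_nonneg fun i _ => Real.rpow_nonneg dist_nonneg _
    have h2 : dist x y ^ (p:ℝ) = ∑ i, dist (x i) (y i) ^ (p:ℝ) := by
      rw [h1, ← Real.rpow_mul hsnn, one_div, inv_mul_cancel₀ hp0, Real.rpow_one]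
    calc dist x y ^ p = dist x y ^ (p:ℝ) := by rw [Real.rpow_natCast]
      _ = ∑ i, dist (x i) (y i) ^ (p:ℝ) := h2
      _ = ∑ i, dist (x i) (y i) ^ p := by
          exact Finset.sum_congr rfl fun i _ => by rw [Real.rpow_natCast]
  -- P and Q as products
  have hPpi : P = WithLp.toLp _ '' Set.pi Set.univ Ps := by
    rw [hP]; ext x
    exact ⟨fun h => ⟨x.ofLp, Set.mem_univ_pi.2 h, rfl⟩, by
      rintro ⟨y, hy, rfl⟩; exact Set.mem_univ_pi.1 hy⟩
  have hQpi : Q = WithLp.toLp _ '' Set.pi Set.univ Qs := by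
    rw [hQ]; ext x
    exact ⟨fun h => ⟨x.ofLp, Set.mem_univ_pi.2 h, rfl⟩, by
      rintro ⟨y, hy, rfl⟩; exact Set.mem_univ_pi.1 hy⟩
  have hPcomp : IsCompact P := by
    rw [hPpi]; exact (isCompact_univ_pi hPc).image (PiLp.continuous_toLp ..)
  have hQcomp : IsCompact Q := by
    rw [hQpi]; exact (isCompact_univ_pi hQc).image (PiLp.continuous_toLp ..)
  have hPN : P.Nonempty := ⟨WithLp.toLp _ fun i => (hPne i).choose, by
    rw [hP]; exact fun i => (hPne i).choose_spec⟩
  have hQN : Q.Nonempty := ⟨WithLp.toLp _ fun i => (hQne i).choose, by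
    rw [hQ]; exact fun i => (hQne i).choose_spec⟩
  have hfin : EMetric.hausdorffEdist P Q ≠ ⊤ :=
    hausdorffEdist_ne_top_of_nonempty_of_bounded hPN hQN hPcomp.isBounded hQcomp.isBounded
  have hfini : ∀ i, EMetric.hausdorffEdist (Ps i) (Qs i) ≠ ⊤ := fun i =>
    hausdorffEdist_ne_top_of_nonempty_of_bounded (hPne i) (hQne i) (hPc i).isBounded
      (hQc i).isBounded
  -- infDist to the product Q decomposes
  have hinf : ∀ x, infDist x Q ^ p = ∑ i, infDist (x i) (Qs i) ^ p := by
    intro x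
    choose y0 hy hyd using fun i => (hQc i).exists_infDist_eq_dist (hQne i) (x i)
    set y : PiLp (p : ℝ≥0∞) (fun _ : Fin k => PiLp (p : ℝ≥0∞) (fun _ : Fin 2 => ℝ)) :=
      WithLp.toLp _ fun i => y0 i with hydef
    have hyQ : y ∈ Q := by rw [hQ]; exact hy
    obtain ⟨z, hzQ, hz⟩ := hQcomp.exists_infDist_eq_dist hQN x
    have hzQ' : ∀ i, z i ∈ Qs i := by rw [hQ] at hzQ; exact hzQ
    have hle : infDist x Q ^ p ≤ ∑ i, infDist (x i) (Qs i) ^ p := by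
      calc infDist x Q ^ p ≤ dist x y ^ p :=
            pow_le_pow_left₀ infDist_nonneg (infDist_le_dist_of_mem hyQ) p
        _ = ∑ i, dist (x i) (y i) ^ p := hdist x y
        _ = ∑ i, infDist (x i) (Qs i) ^ p := by
            exact Finset.sum_congr rfl fun i _ => by rw [hydef]; rw [hyd i]
    have hge : ∑ i, infDist (x i) (Qs i) ^ p ≤ infDist x Q ^ p := by
      calc ∑ i, infDist (x i) (Qs i) ^ p ≤ ∑ i, dist (x i) (z i) ^ p :=
            Finset.sum_le_sum fun i _ =>
              pow_le_pow_left₀ infDist_nonneg (infDist_le_dist_of_mem (hzQ' i)) p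
        _ = dist x z ^ p := (hdist x z).symm
        _ = infDist x Q ^ p := by rw [hz]
    exact le_antisymm hle hge
  -- each factor Hausdorff distance is attained
  have hattain : ∀ i, ∃ x ∈ Ps i, infDist x (Qs i) = hausdorffDist (Ps i) (Qs i) := by
    intro i
    obtain ⟨x₀, hx₀, hmax⟩ := (hPc i).exists_isMaxOn (hPne i)
      (continuous_infDist_pt (Qs i)).continuousOn
    refine ⟨x₀, hx₀, le_antisymm (infDist_le_hausdorffDist_of_mem hx₀ (hfini i)) ?_⟩
    refine hausdorffDist_le_of_infDist infDist_nonneg (fun x hx => hmax hx) ?_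
    intro y hy
    rw [infDist_zero_of_mem (hsub i hy)]
    exact infDist_nonneg
  choose x₀ hx₀P hx₀d using hattain
  set xstar : PiLp (p : ℝ≥0∞) (fun _ : Fin k => PiLp (p : ℝ≥0∞) (fun _ : Fin 2 => ℝ)) :=
    WithLp.toLp _ fun i => x₀ i with hxs
  have hx₀ : xstar ∈ P := by rw [hP]; exact hx₀P
  -- lower bound: ∑ ≤ δ^p
  have hlow : ∑ i, hausdorffDist (Ps i) (Qs i) ^ p ≤ hausdorffDist P Q ^ p := by
    calc ∑ i, hausdorffDist (Ps i) (Qs i) ^ p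
        = ∑ i, infDist (xstar i) (Qs i) ^ p := by
          exact Finset.sum_congr rfl fun i _ => by rw [hxs]; rw [hx₀d i]
      _ = infDist xstar Q ^ p := (hinf _).symm
      _ ≤ hausdorffDist P Q ^ p :=
          pow_le_pow_left₀ infDist_nonneg (infDist_le_hausdorffDist_of_mem hx₀ hfin) p
  -- upper bound: δ ≤ (∑)^{1/p}
  have hsnn : (0:ℝ) ≤ ∑ i, hausdorffDist (Ps i) (Qs i) ^ p :=
    Finset.sum_nonneg fun i _ => pow_nonneg hausdorffDist_nonneg p
  set r : ℝ := (∑ i, hausdorffDist (Ps i) (Qs i) ^ p) ^ (1 / (p:ℝ)) with hr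
  have hrnn : 0 ≤ r := Real.rpow_nonneg hsnn _
  have hrp : r ^ p = ∑ i, hausdorffDist (Ps i) (Qs i) ^ p := by
    rw [hr, ← Real.rpow_natCast (((∑ i, hausdorffDist (Ps i) (Qs i) ^ p) ^ (1 / (p:ℝ)))) p,
      ← Real.rpow_mul hsnn, one_div, inv_mul_cancel₀ hp0, Real.rpow_one]
  have hup : hausdorffDist P Q ≤ r := by
    refine hausdorffDist_le_of_infDist hrnn ?_ ?_
    · intro x hx
      have hxP : ∀ i, x i ∈ Ps i := by rw [hP] at hx; exact hx
      have h1 : infDist x Q ^ p ≤ r ^ p := by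
        rw [hinf x, hrp]
        exact Finset.sum_le_sum fun i _ =>
          pow_le_pow_left₀ infDist_nonneg
            (infDist_le_hausdorffDist_of_mem (hxP i) (hfini i)) p
      exact le_of_pow_le_pow_left₀ (by omega) hrnn h1
    · intro y hy
      have : y ∈ P := by
        rw [hP]; rw [hQ] at hy; exact fun i => hsub i (hy i)
      rw [infDist_zero_of_mem this]
      exact hrnn
  refine le_antisymm ?_ hlow
  calc hausdorffDist P Q ^ p ≤ r ^ p := pow_le_pow_left₀ hausdorffDist_nonneg hup p
    _ = _ := hrp
end

section
/- Let P ⊆ ℝ^d (Euclidean) be a nonempty compact convex set and ρ, ρ' > 0. Then P + ρ'B₂ = ⋂_{x ∈ bd(P+ρB₂)} { z ∈ ℝ^d : (x − Π_P(x))ᵀ z ≤ (x − Π_P(x))ᵀ Π_P(x) + ρρ' }, where the intersection runs over all boundary points x of P + ρB₂ and B₂ is the closed Euclidean unit ball. -/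
open scoped RealInnerProductSpace Pointwise

open Metric EMetric Set

/-- **Outer parallel bodies as intersections of halfspaces.**
Let `P ⊆ ℝ^d` be a nonempty compact convex set and `ρ, ρ' > 0`. Then
`P + ρ'B₂ = ⋂_{x ∈ bd(P+ρB₂)} { z : ⟪x − Π_P(x), z⟫ ≤ ⟪x − Π_P(x), Π_P(x)⟫ + ρρ' }`,
where `Π_P` is the (unique) nearest-point map of `P`. -/
theorem outer_parallel_body_eq_iInter_halfspaces
    (d : ℕ) (P : Set (EuclideanSpace ℝ (Fin d)))
    (hPne : P.Nonempty) (hPc : IsCompact P) (hPconv : Convex ℝ P)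
    (proj : EuclideanSpace ℝ (Fin d) → EuclideanSpace ℝ (Fin d))
    (hproj : ∀ x, proj x ∈ P ∧ ‖x - proj x‖ = Metric.infDist x P)
    (ρ ρ' : ℝ) (hρ : 0 < ρ) (hρ' : 0 < ρ') :
    P + ρ' • Metric.closedBall (0 : EuclideanSpace ℝ (Fin d)) 1
      = ⋂ x ∈ frontier (P + ρ • Metric.closedBall (0 : EuclideanSpace ℝ (Fin d)) 1),
          {z : EuclideanSpace ℝ (Fin d) |
            ⟪x - proj x, z⟫ ≤ ⟪x - proj x, proj x⟫ + ρ * ρ'} := by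
  haveI : Nonempty P := hPne.to_subtype
  have hPclosed : IsClosed P := hPc.isClosed
  -- variational inequality for `proj`
  have hvar : ∀ x : EuclideanSpace ℝ (Fin d), ∀ p ∈ P, ⟪x - proj x, p - proj x⟫ ≤ 0 := by
    intro x
    have h1 : ‖x - proj x‖ = ⨅ w : P, ‖x - w‖ := by
      rw [(hproj x).2, Metric.infDist_eq_iInf]
      simp_rw [dist_eq_norm]
    exact (norm_eq_iInf_iff_real_inner_le_zero hPconv (hproj x).1).1 h1
  -- uniqueness of nearest point
  have huniq : ∀ (x q : EuclideanSpace ℝ (Fin d)), q ∈ P →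
      (∀ p ∈ P, ⟪x - q, p - q⟫ ≤ 0) → proj x = q := by
    intro x q hq hvq
    have h1 := hvar x q hq
    have h2 := hvq (proj x) (hproj x).1
    have key : ⟪proj x - q, proj x - q⟫ = ⟪x - q, proj x - q⟫ + ⟪x - proj x, q - proj x⟫ := by
      simp only [inner_sub_left, inner_sub_right]
      simp only [real_inner_comm q (proj x)]
      ring
    have h3 : ⟪proj x - q, proj x - q⟫ ≤ 0 := by linarith
    have := real_inner_self_nonpos.1 h3
    rwa [sub_eq_zero] at this
  -- rewrite the Minkowski sums as cthickenings
  have hadd : ∀ r : ℝ, 0 ≤ r →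
      P + r • Metric.closedBall (0 : EuclideanSpace ℝ (Fin d)) 1 = cthickening r P := by
    intro r hr
    rw [smul_unitClosedBall_of_nonneg hr, hPc.add_closedBall_zero hr]
  -- membership in cthickening via infDist
  have hmem : ∀ (δ : ℝ), 0 ≤ δ → ∀ y : EuclideanSpace ℝ (Fin d),
      (y ∈ cthickening δ P ↔ infDist y P ≤ δ) := by
    intro δ hδ y
    rw [mem_cthickening_iff]
    exact ENNReal.le_ofReal_iff_toReal_le (infEdist_ne_top hPne) hδ
  -- frontier points are at distance exactly ρ from P
  have hfr : ∀ x ∈ frontier (cthickening ρ P), infDist x P = ρ := by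
    intro x hx
    have h := frontier_cthickening_subset (δ := ρ) P hx
    have : infDist x P = (ENNReal.ofReal ρ).toReal := by
      rw [Metric.infDist, h]
    rwa [ENNReal.toReal_ofReal hρ.le] at this
  rw [hadd ρ' hρ'.le, hadd ρ hρ.le]
  ext z
  simp only [Set.mem_iInter, Set.mem_setOf_eq]
  rw [hmem ρ' hρ'.le z]
  constructor
  · -- forward direction
    intro hz x hx
    have hdx : infDist x P = ρ := hfr x hx
    have hnx : ‖x - proj x‖ = ρ := by rw [(hproj x).2, hdx]
    obtain ⟨p, hp, hzp⟩ := hPclosed.exists_infDist_eq_dist hPne z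
    have hzp' : ‖z - p‖ ≤ ρ' := by rw [← dist_eq_norm, ← hzp]; exact hz
    have h1 : ⟪x - proj x, p - proj x⟫ ≤ 0 := hvar x p hp
    have h2 : ⟪x - proj x, z - p⟫ ≤ ρ * ρ' := by
      calc ⟪x - proj x, z - p⟫ ≤ ‖x - proj x‖ * ‖z - p‖ := real_inner_le_norm _ _
        _ ≤ ρ * ρ' := by rw [hnx]; exact mul_le_mul_of_nonneg_left hzp' hρ.le
    have key : ⟪x - proj x, z⟫
        = ⟪x - proj x, p - proj x⟫ + ⟪x - proj x, proj x⟫ + ⟪x - proj x, z - p⟫ := by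
      simp only [inner_sub_right]; ring
    linarith
  · -- reverse direction
    intro hz
    set q := proj z with hqdef
    have hq : q ∈ P := (hproj z).1
    have hdz : infDist z P = ‖z - q‖ := ((hproj z).2).symm
    rcases le_or_gt ‖z - q‖ ρ' with hle | hgt
    · rw [hdz]; exact hle
    have hn : (0 : ℝ) < ‖z - q‖ := lt_trans hρ' hgt
    set u : EuclideanSpace ℝ (Fin d) := ‖z - q‖⁻¹ • (z - q) with hudef
    have hun : ‖u‖ = 1 := by
      rw [hudef, norm_smul, norm_inv, norm_norm, inv_mul_cancel₀ hn.ne']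
    set x : EuclideanSpace ℝ (Fin d) := q + ρ • u with hxdef
    have hxq : x - q = (ρ * ‖z - q‖⁻¹) • (z - q) := by
      rw [hxdef, hudef, add_sub_cancel_left, smul_smul]
    have hvarx : ∀ p ∈ P, ⟪x - q, p - q⟫ ≤ 0 := by
      intro p hp
      rw [hxq, real_inner_smul_left]
      exact mul_nonpos_of_nonneg_of_nonpos
        (mul_nonneg hρ.le (inv_nonneg.2 hn.le)) (hvar z p hp)
    have hxn : ‖x - q‖ = ρ := by
      rw [hxq, norm_smul]
      rw [Real.norm_of_nonneg (mul_nonneg hρ.le (inv_nonneg.2 hn.le))]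
      field_simp
    have huxq : ⟪u, x - q⟫ = ρ := by
      have : x - q = ρ • u := by rw [hxdef, add_sub_cancel_left]
      rw [this, real_inner_smul_right, real_inner_self_eq_norm_sq, hun]
      ring
    have huqp : ∀ p ∈ P, 0 ≤ ⟪u, q - p⟫ := by
      intro p hp
      rw [hudef, real_inner_smul_left]
      have : ⟪z - q, q - p⟫ = -⟪z - q, p - q⟫ := by
        rw [← inner_neg_right]; congr 1; abel
      rw [this]
      exact mul_nonneg (inv_nonneg.2 hn.le) (neg_nonneg.2 (hvar z p hp))
    -- lower bound for distances from points on the ray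
    have hray : ∀ t : ℝ, 0 ≤ t → ∀ p ∈ P, ρ + t ≤ ‖x + t • u - p‖ := by
      intro t ht p hp
      have h1 : ⟪u, x + t • u - p⟫ ≤ ‖x + t • u - p‖ := by
        have h := real_inner_le_norm u (x + t • u - p)
        rwa [hun, one_mul] at h
      have h2 : ⟪u, x + t • u - p⟫ = ⟪u, x - q⟫ + t * ⟪u, u⟫ + ⟪u, q - p⟫ := by
        have : x + t • u - p = (x - q) + t • u + (q - p) := by abel
        rw [this, inner_add_right, inner_add_right, real_inner_smul_right]
      have h3 : ⟪u, u⟫ = (1 : ℝ) := by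
        rw [real_inner_self_eq_norm_sq, hun]; norm_num
      have := huqp p hp
      rw [h2, huxq, h3] at h1
      linarith
    have hlowgen : ∀ t : ℝ, 0 ≤ t → ρ + t ≤ infDist (x + t • u) P := by
      intro t ht
      rw [Metric.infDist_eq_iInf]
      exact le_ciInf fun ⟨p, hp⟩ => by
        rw [dist_eq_norm]; exact hray t ht p hp
    have hdxP : infDist x P = ρ := by
      refine le_antisymm ?_ ?_
      · have h := infDist_le_dist_of_mem (x := x) hq
        rwa [dist_eq_norm, hxn] at h
      · have h := hlowgen 0 le_rfl
        simpa using h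
    have hprojx : proj x = q := huniq x q hq hvarx
    have hxfr : x ∈ frontier (cthickening ρ P) := by
      rw [(isClosed_cthickening).frontier_eq, Set.mem_diff]
      refine ⟨(hmem ρ hρ.le x).2 hdxP.le, ?_⟩
      intro hint
      obtain ⟨ε, hε, hball⟩ := Metric.mem_nhds_iff.1 (mem_interior_iff_mem_nhds.1 hint)
      have hx' : x + (ε / 2) • u ∈ ball x ε := by
        rw [Metric.mem_ball, dist_eq_norm, add_sub_cancel_left, norm_smul, hun, mul_one,
          Real.norm_of_nonneg (by linarith : (0:ℝ) ≤ ε / 2)]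
        linarith
      have h1 : infDist (x + (ε / 2) • u) P ≤ ρ := (hmem ρ hρ.le _).1 (hball hx')
      have h2 := hlowgen (ε / 2) (by linarith)
      linarith
    have hineq := hz x hxfr
    rw [hprojx] at hineq
    have h3 : ⟪x - q, z - q⟫ ≤ ρ * ρ' := by
      rw [inner_sub_right]; linarith
    rw [hxq, real_inner_smul_left, real_inner_self_eq_norm_sq] at h3
    have h4 : ρ * ‖z - q‖ ≤ ρ * ρ' := by
      have : ρ * ‖z - q‖⁻¹ * ‖z - q‖ ^ 2 = ρ * ‖z - q‖ := by
        field_simp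
      linarith [this ▸ h3]
    have : ‖z - q‖ ≤ ρ' := le_of_mul_le_mul_left h4 hρ
    linarith
end

section
/- Let P ⊆ ℝ^d (Euclidean) be a nonempty compact convex set and let q ∈ ℝ^d with q ∉ P. Then the function f_q(α,c) := d₂(q, αP + c) on (0,∞) × ℝ^d ⊆ ℝ^{d+1} is differentiable at (1,0) with gradient ∇f_q(1,0) = −(1/‖q − Π_P(q)‖₂) · ( (q − Π_P(q))ᵀΠ_P(q) , q − Π_P(q) ) ∈ ℝ × ℝ^d. -/
open scoped RealInnerProductSpace

open Metric Asymptotics InnerProductSpace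

/-- **Differentiating `f_q`.**
Let `P ⊆ ℝ^d` be a nonempty compact convex set and `q ∉ P`. Then the function
`f_q(α,c) := d₂(q, αP + c)` on `ℝ × ℝ^d ≅ ℝ^{d+1}` (with the ℓ₂ inner product) is
differentiable at `(1,0)` with gradient
`−(1/‖q − Π_P(q)‖) ⬝ (⟪q − Π_P(q), Π_P(q)⟫, q − Π_P(q))`,
where `Π_P` is the (unique) nearest-point map of `P`. -/
theorem hasGradientAt_fq
    (d : ℕ) (P : Set (EuclideanSpace ℝ (Fin d)))
    (hPne : P.Nonempty) (hPc : IsCompact P) (hPconv : Convex ℝ P)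
    (proj : EuclideanSpace ℝ (Fin d) → EuclideanSpace ℝ (Fin d))
    (hproj : ∀ x, proj x ∈ P ∧ ‖x - proj x‖ = Metric.infDist x P)
    (q : EuclideanSpace ℝ (Fin d)) (hq : q ∉ P) :
    HasGradientAt
      (fun v : WithLp 2 (ℝ × EuclideanSpace ℝ (Fin d)) =>
        Metric.infDist q
          ((fun x => ((WithLp.equiv 2 _) v).1 • x + ((WithLp.equiv 2 _) v).2) '' P))
      (-((WithLp.equiv 2 (ℝ × EuclideanSpace ℝ (Fin d))).symm
        (‖q - proj q‖⁻¹ * ⟪q - proj q, proj q⟫, ‖q - proj q‖⁻¹ • (q - proj q))))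
      ((WithLp.equiv 2 (ℝ × EuclideanSpace ℝ (Fin d))).symm (1, 0)) := by
  classical
  obtain ⟨hpP, hpd⟩ := hproj q
  have hqp : q - proj q ≠ 0 := sub_ne_zero.mpr (fun h => hq (h ▸ hpP))
  have hD : (0:ℝ) < ‖q - proj q‖ := norm_pos_iff.mpr hqp
  set u : EuclideanSpace ℝ (Fin d) := ‖q - proj q‖⁻¹ • (q - proj q) with hu
  have hunorm : ‖u‖ = 1 := by
    rw [hu, norm_smul, norm_inv, norm_norm, inv_mul_cancel₀ hD.ne']
  have hsupp : ∀ w ∈ P, ⟪q - proj q, w - proj q⟫ ≤ 0 := by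
    rw [← norm_eq_iInf_iff_real_inner_le_zero hPconv hpP]
    rw [hpd, Metric.infDist_eq_iInf]
    exact iInf_congr fun w => dist_eq_norm q w
  have hu_le : ∀ w ∈ P, ⟪u, w⟫ ≤ ⟪u, proj q⟫ := by
    intro w hw
    have h1 : ⟪u, w - proj q⟫ ≤ 0 := by
      rw [hu, real_inner_smul_left]
      exact mul_nonpos_of_nonneg_of_nonpos (inv_nonneg.mpr hD.le) (hsupp w hw)
    rw [inner_sub_right] at h1
    linarith
  have hu_qp : ⟪u, q - proj q⟫ = ‖q - proj q‖ := by
    rw [hu, real_inner_smul_left, real_inner_self_eq_norm_sq, sq,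
      inv_mul_cancel_left₀ hD.ne']
  have hu_q : ⟪u, q⟫ = ‖q - proj q‖ + ⟪u, proj q⟫ := by
    have := hu_qp; rw [inner_sub_right] at this; linarith
  -- norm derivative
  have hnorm : HasFDerivAt (fun y : EuclideanSpace ℝ (Fin d) => ‖y‖) (innerSL ℝ u)
      (q - proj q) := by
    have h1 := (hasStrictFDerivAt_norm_sq (q - proj q)).hasFDerivAt
    have h2 : HasDerivAt Real.sqrt (1/(2*Real.sqrt (‖q - proj q‖^2))) (‖q - proj q‖^2) :=
      Real.hasDerivAt_sqrt (by positivity)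
    have h3 := h2.comp_hasFDerivAt (q - proj q) h1
    have hfun : (fun y : EuclideanSpace ℝ (Fin d) => ‖y‖) = fun y => Real.sqrt (‖y‖^2) := by
      funext y; rw [Real.sqrt_sq (norm_nonneg y)]
    rw [hfun]
    refine HasFDerivAt.congr_fderiv h3 ?_
    ext y
    rw [Real.sqrt_sq hD.le]
    simp only [ContinuousLinearMap.smul_apply, ContinuousLinearMap.add_apply,
      innerSL_apply_apply, smul_eq_mul, two_smul, ContinuousLinearMap.coe_smul', Pi.smul_apply]
    rw [hu, real_inner_smul_left]
    field_simp
    ring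
  -- the affine map
  set M : WithLp 2 (ℝ × EuclideanSpace ℝ (Fin d)) →L[ℝ] EuclideanSpace ℝ (Fin d) :=
    ((ContinuousLinearMap.fst ℝ ℝ (EuclideanSpace ℝ (Fin d))).smulRight (proj q)
      + ContinuousLinearMap.snd ℝ ℝ (EuclideanSpace ℝ (Fin d))).comp
      (WithLp.prodContinuousLinearEquiv 2 ℝ ℝ (EuclideanSpace ℝ (Fin d))).toContinuousLinearMap
    with hMdef
  have hM : ∀ w, M w = ((WithLp.equiv 2 _) w).1 • proj q + ((WithLp.equiv 2 _) w).2 :=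
    fun w => rfl
  set v₀ : WithLp 2 (ℝ × EuclideanSpace ℝ (Fin d)) := (WithLp.equiv 2 _).symm (1, 0) with hv₀
  -- value of M on increments
  have hMsub : ∀ v : WithLp 2 (ℝ × EuclideanSpace ℝ (Fin d)),
      M (v - v₀) = (((WithLp.equiv 2 _) v).1 - 1) • proj q + ((WithLp.equiv 2 _) v).2 := by
    intro v
    rw [hM, WithLp.equiv_apply, WithLp.ofLp_sub, ← WithLp.equiv_apply, ← WithLp.equiv_apply, hv₀, Equiv.apply_symm_apply, Prod.fst_sub, Prod.snd_sub]
    simp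
  have hA : HasFDerivAt (fun v => ((q - proj q) - M (v - v₀))) (-M) v₀ := by
    have h1 : HasFDerivAt (fun v => M (v - v₀)) M v₀ :=
      M.hasFDerivAt.comp v₀ ((hasFDerivAt_id v₀).sub_const v₀)
    exact ((hasFDerivAt_const (q - proj q) v₀).sub h1).congr_fderiv (by simp)
  have hNcomp : HasFDerivAt (fun v => ‖(q - proj q) - M (v - v₀)‖)
      ((innerSL ℝ u).comp (-M)) v₀ := by
    have h2 := HasFDerivAt.comp (g := fun y : EuclideanSpace ℝ (Fin d) => ‖y‖) v₀
      (by simpa using hnorm) hA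
    exact h2
  have hN : (fun v => ‖(q - proj q) - M (v - v₀)‖ - ‖q - proj q‖ + ⟪u, M (v - v₀)⟫)
      =o[nhds v₀] (fun v => v - v₀) := by
    have h := hNcomp.isLittleO
    simp only [sub_self, map_zero, sub_zero, ContinuousLinearMap.comp_apply,
      ContinuousLinearMap.neg_apply, innerSL_apply_apply, inner_neg_right, sub_neg_eq_add] at h
    exact h
  -- eventually fst positive
  have hev : ∀ᶠ v : WithLp 2 (ℝ × EuclideanSpace ℝ (Fin d)) in nhds v₀,
      0 < ((WithLp.equiv 2 _) v).1 := by
    have hc : Continuous (fun v : WithLp 2 (ℝ × EuclideanSpace ℝ (Fin d)) =>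
        ((WithLp.equiv 2 _) v).1) :=
      continuous_fst.comp (WithLp.prodContinuousLinearEquiv 2 ℝ ℝ _).continuous
    have h0 : ((WithLp.equiv 2 _) v₀).1 = 1 := by simp [hv₀]
    have ht := hc.continuousAt (x := v₀)
    simp only [ContinuousAt, h0] at ht
    exact ht.eventually (eventually_gt_nhds one_pos)
  -- value at v₀
  have hfv₀ : Metric.infDist q
      ((fun x => ((WithLp.equiv 2 _) v₀).1 • x + ((WithLp.equiv 2 _) v₀).2) '' P)
      = ‖q - proj q‖ := by
    rw [hv₀]
    simp only [Equiv.apply_symm_apply, one_smul, add_zero]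
    rw [Set.image_id', ← hpd]
  -- the linear functional
  have hL : ∀ w, (toDual ℝ (WithLp 2 (ℝ × EuclideanSpace ℝ (Fin d))))
      (-((WithLp.equiv 2 (ℝ × EuclideanSpace ℝ (Fin d))).symm
        (‖q - proj q‖⁻¹ * ⟪q - proj q, proj q⟫, u))) w
      = -⟪u, M w⟫ := by
    intro w
    rw [toDual_apply_apply, inner_neg_left, WithLp.prod_inner_apply, hM]
    simp only [WithLp.equiv_symm_apply, WithLp.ofLp_toLp, RCLike.inner_apply,
      conj_trivial, WithLp.equiv_apply, inner_add_right,
      real_inner_smul_right, hu, real_inner_smul_left]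
  -- upper bound
  have hupper : ∀ v : WithLp 2 (ℝ × EuclideanSpace ℝ (Fin d)),
      Metric.infDist q
        ((fun x => ((WithLp.equiv 2 _) v).1 • x + ((WithLp.equiv 2 _) v).2) '' P)
      ≤ ‖(q - proj q) - M (v - v₀)‖ := by
    intro v
    have hmem : ((WithLp.equiv 2 _) v).1 • proj q + ((WithLp.equiv 2 _) v).2
        ∈ (fun x => ((WithLp.equiv 2 _) v).1 • x + ((WithLp.equiv 2 _) v).2) '' P :=
      Set.mem_image_of_mem _ hpP
    refine le_trans (Metric.infDist_le_dist_of_mem hmem) ?_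
    rw [dist_eq_norm, hMsub v]
    apply le_of_eq
    congr 1
    rw [sub_smul, one_smul]
    abel
  -- lower bound
  have hlower : ∀ v : WithLp 2 (ℝ × EuclideanSpace ℝ (Fin d)),
      0 < ((WithLp.equiv 2 _) v).1 →
      ‖q - proj q‖ - ⟪u, M (v - v₀)⟫ ≤ Metric.infDist q
        ((fun x => ((WithLp.equiv 2 _) v).1 • x + ((WithLp.equiv 2 _) v).2) '' P) := by
    intro v hα
    set α := ((WithLp.equiv 2 (ℝ × EuclideanSpace ℝ (Fin d))) v).1 with hα'
    set c := ((WithLp.equiv 2 (ℝ × EuclideanSpace ℝ (Fin d))) v).2 with hc'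
    have hXM : ⟪u, M (v - v₀)⟫ = (α - 1) * ⟪u, proj q⟫ + ⟪u, c⟫ := by
      rw [hMsub v, inner_add_right, real_inner_smul_right]
    rw [Metric.infDist_eq_iInf]
    haveI : Nonempty ((fun x => α • x + c) '' P : Set (EuclideanSpace ℝ (Fin d))) :=
      (hPne.image _).to_subtype
    refine le_ciInf ?_
    rintro ⟨s, w, hw, rfl⟩
    rw [dist_eq_norm]
    have key : ⟪u, q - (α • w + c)⟫ ≤ ‖q - (α • w + c)‖ := by
      refine le_trans (real_inner_le_norm u _) ?_
      rw [hunorm, one_mul]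
    have hexp : ⟪u, q - (α • w + c)⟫
        = ‖q - proj q‖ + ⟪u, proj q⟫ - α * ⟪u, w⟫ - ⟪u, c⟫ := by
      rw [inner_sub_right, inner_add_right, real_inner_smul_right, hu_q]
      ring
    have hmul : α * ⟪u, w⟫ ≤ α * ⟪u, proj q⟫ :=
      mul_le_mul_of_nonneg_left (hu_le w hw) hα.le
    rw [hXM]
    refine le_trans ?_ key
    rw [hexp]
    linarith
  -- assemble
  have hfinal : (fun v : WithLp 2 (ℝ × EuclideanSpace ℝ (Fin d)) =>
      Metric.infDist q
        ((fun x => ((WithLp.equiv 2 _) v).1 • x + ((WithLp.equiv 2 _) v).2) '' P)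
        - ‖q - proj q‖ + ⟪u, M (v - v₀)⟫) =o[nhds v₀] (fun v => v - v₀) := by
    refine IsBigO.trans_isLittleO ?_ hN
    rw [isBigO_iff]
    refine ⟨1, ?_⟩
    filter_upwards [hev] with v hv
    have h1 := hupper v
    have h2 := hlower v hv
    have h3 := le_abs_self (‖q - proj q - M (v - v₀)‖ - ‖q - proj q‖ + ⟪u, M (v - v₀)⟫)
    rw [Real.norm_eq_abs, Real.norm_eq_abs, one_mul, abs_of_nonneg (by linarith)]
    linarith
  rw [hasGradientAt_iff_hasFDerivAt]
  rw [hasFDerivAt_iff_isLittleO]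
  simp only [hfv₀, hL, sub_neg_eq_add]
  exact hfinal
end

section
/- Let P, Q ⊆ ℝ^d (Euclidean) be convex bodies containing the origin in their interiors. Then P is in optimal homothetic position with respect to Q (i.e., δ₂(P,Q) = δ_H(P,Q)) if and only if there exist ρ ≥ 0 and finite sets R ⊆ P, S ⊆ Q with |R| + |S| ≤ d + 2 such that: (1) P ⊆ Q + ρB₂ and Q ⊆ P + ρB₂; (2) d₂(p,Q) = ρ for all p ∈ R and d₂(q,P) = ρ for all q ∈ S; (3) the origin of ℝ^{d+1} lies in the convex hull of the set { ( (p − Π_Q(p))ᵀp , p − Π_Q(p) ) : p ∈ R } ∪ { ( (Π_P(q) − q)ᵀΠ_P(q) , Π_P(q) − q ) : q ∈ S }. -/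
open scoped RealInnerProductSpace Pointwise
open Metric Set

lemma pad_sum {M : Type*} [AddCommMonoid M] {c n : ℕ} (hcard : c ≤ n) (g : Fin c → M) :
    (∑ i : Fin n, if h : (i : ℕ) < c then g ⟨i, h⟩ else 0) = ∑ j : Fin c, g j := by
  rw [Fin.sum_univ_eq_sum_range (fun k => if h : k < c then g ⟨k, h⟩ else 0) n,
    ← Finset.sum_subset (Finset.range_subset_range.2 hcard)
      (fun k _ hk => by rw [dif_neg (by simpa using hk)]),
    ← Fin.sum_univ_eq_sum_range (fun k => if h : k < c then g ⟨k, h⟩ else 0) c]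
  exact Finset.sum_congr rfl fun i _ => by rw [dif_pos i.isLt]

lemma isCompact_convexHull_fd {E : Type*} [NormedAddCommGroup E] [NormedSpace ℝ E]
    [FiniteDimensional ℝ E] {s : Set E} (hs : IsCompact s) :
    IsCompact (convexHull ℝ s) := by
  rcases s.eq_empty_or_nonempty with rfl | ⟨x₀, hx₀⟩
  · simpa using isCompact_empty
  set n := Module.finrank ℝ E + 1 with hn
  set φ : (Fin n → ℝ) × (Fin n → E) → E := fun p => ∑ i, p.1 i • p.2 i with hφ
  have hcont : Continuous φ :=
    continuous_finset_sum _ fun i _ =>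
      ((continuous_apply i).comp continuous_fst).smul ((continuous_apply i).comp continuous_snd)
  set D : Set ((Fin n → ℝ) × (Fin n → E)) :=
    (stdSimplex ℝ (Fin n)) ×ˢ (Set.univ.pi fun _ => s) with hD
  have hDc : IsCompact D := (isCompact_stdSimplex (𝕜 := ℝ) (ι := Fin n)).prod (isCompact_univ_pi fun _ => hs)
  have himg : φ '' D = convexHull ℝ s := by
    apply Subset.antisymm
    · rintro x ⟨⟨w, f⟩, ⟨⟨hw0, hw1⟩, hf⟩, rfl⟩
      exact (convex_convexHull ℝ s).sum_mem (fun i _ => hw0 i) hw1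
        (fun i _ => subset_convexHull ℝ s (hf i (mem_univ i)))
    · intro x hx
      rw [convexHull_eq_union] at hx
      simp only [mem_iUnion] at hx
      obtain ⟨t, hts, hai, hxt⟩ := hx
      have hcard : t.card ≤ n := by
        have h1 := hai.card_le_finrank_succ
        rw [Fintype.card_coe] at h1
        exact h1.trans (Nat.add_le_add_right (Submodule.finrank_le _) 1)
      rw [Finset.convexHull_eq] at hxt
      obtain ⟨w, hw0, hw1, hcm⟩ := hxt
      set c := t.card with hc
      have e : Fin c ≃ {y // y ∈ t} := (t.equivFin).symm
      refine ⟨(fun i => if h : (i : ℕ) < c then w (e ⟨i, h⟩) else 0,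
               fun i => if h : (i : ℕ) < c then (e ⟨i, h⟩ : E) else x₀), ⟨⟨?_, ?_⟩, ?_⟩, ?_⟩
      · intro i
        dsimp only
        split
        · exact hw0 _ (e _).2
        · exact le_refl 0
      · rw [pad_sum hcard (fun j => w (e j)), Equiv.sum_comp e (fun y => w (y : E)),
          Finset.sum_coe_sort t w]
        exact hw1
      · intro i _
        dsimp only
        split
        · exact hts (e _).2
        · exact hx₀
      · show (∑ i : Fin n, _) = x
        have hterm : ∀ i : Fin n,
            (if h : (i : ℕ) < c then w (e ⟨i, h⟩) else 0) •
              (if h : (i : ℕ) < c then (e ⟨i, h⟩ : E) else x₀)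
            = if h : (i : ℕ) < c then w (e ⟨i, h⟩) • (e ⟨i, h⟩ : E) else 0 := by
          intro i; split <;> simp
        rw [Finset.sum_congr rfl fun i _ => hterm i,
          pad_sum hcard (fun j => w (e j) • ((e j : E))),
          Equiv.sum_comp e (fun y : {y // y ∈ t} => w (y : E) • (y : E))]
        rw [Finset.centerMass_eq_of_sum_1 t id hw1] at hcm
        rw [← hcm]
        rw [show (∑ i ∈ t, w i • id i) = ∑ i ∈ t, w i • i from rfl,
          ← Finset.sum_coe_sort t (fun y => w y • (y : E))]
  exact himg ▸ hDc.image hcont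

section Helpers
variable {E : Type*} [NormedAddCommGroup E] [InnerProductSpace ℝ E]

variable {E : Type*} [NormedAddCommGroup E] [InnerProductSpace ℝ E]

lemma vi_of_nearest' {K : Set E} (hK : Convex ℝ K) {x y : E} (hy : y ∈ K)
    (hxy : ‖x - y‖ = Metric.infDist x K) {z : E} (hz : z ∈ K) :
    ⟪x - y, z - y⟫ ≤ 0 := by
  have h : ‖x - y‖ = ⨅ w : K, ‖x - w‖ := by
    rw [hxy, Metric.infDist_eq_iInf]; simp_rw [dist_eq_norm]
  exact (norm_eq_iInf_iff_real_inner_le_zero hK hy).1 h z hz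

lemma proj_lip' {K : Set E} (hK : Convex ℝ K) {f : E → E}
    (hf : ∀ x, f x ∈ K ∧ ‖x - f x‖ = Metric.infDist x K) : Continuous f := by
  have lip : ∀ x₁ x₂, ‖f x₁ - f x₂‖ ≤ ‖x₁ - x₂‖ := by
    intro x₁ x₂
    set a := f x₁ - f x₂ with ha
    have h1 : ⟪x₁ - f x₁, f x₂ - f x₁⟫ ≤ 0 :=
      vi_of_nearest' hK (hf x₁).1 (hf x₁).2 (hf x₂).1
    have h2 : ⟪x₂ - f x₂, f x₁ - f x₂⟫ ≤ 0 :=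
      vi_of_nearest' hK (hf x₂).1 (hf x₂).2 (hf x₁).1
    have key : ⟪a, a⟫ ≤ ⟪x₁ - x₂, a⟫ := by
      have e2 : ⟪a - (x₁ - x₂), a⟫ = ⟪a, a⟫ - ⟪x₁ - x₂, a⟫ := inner_sub_left _ _ _
      have e4 : a - (x₁ - x₂) = (f x₁ - x₁) + (x₂ - f x₂) := by rw [ha]; abel
      have e5 : ⟪a - (x₁ - x₂), a⟫ = ⟪f x₁ - x₁, a⟫ + ⟪x₂ - f x₂, a⟫ := by
        rw [e4, inner_add_left]
      have e3 : ⟪f x₁ - x₁, a⟫ ≤ 0 := by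
        have h6 : ⟪f x₁ - x₁, a⟫ = ⟪x₁ - f x₁, f x₂ - f x₁⟫ := by
          rw [ha, ← inner_neg_neg]; congr 1 <;> abel
        linarith [h6, h1]
      linarith [e2, e5, e3, h2]
    have hcs : ⟪x₁ - x₂, a⟫ ≤ ‖x₁ - x₂‖ * ‖a‖ := real_inner_le_norm _ _
    have hself : ⟪a, a⟫ = ‖a‖ ^ 2 := real_inner_self_eq_norm_sq a
    rcases eq_or_lt_of_le (norm_nonneg a) with h0 | h0
    · rw [← h0]; exact norm_nonneg _
    · nlinarith [key, hcs, hself]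
  refine (LipschitzWith.of_dist_le_mul (K := 1) (f := f) ?_).continuous
  intro x y
  rw [NNReal.coe_one, one_mul, dist_eq_norm, dist_eq_norm]
  exact lip x y

-- margin lemma: separates the compactness argument
lemma margin_aux {P : Set E} (hPc : IsCompact P) {ψ dQ : E → ℝ} (hψc : Continuous ψ)
    (hdc : Continuous dQ) {ρ ε : ℝ} (hε : 0 < ε)
    (hb : ∀ p ∈ P, dQ p ≤ ρ)
    (hA : ∀ p ∈ P, dQ p = ρ → ψ p < -ε) :
    ∃ δ > 0, ∀ p ∈ P, ρ - δ < dQ p → ψ p ≤ -(ε/2) := by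
  classical
  set K := P ∩ {p | -(ε/2) ≤ ψ p} with hK
  have hKc : IsCompact K := hPc.inter_right (isClosed_le continuous_const hψc)
  rcases K.eq_empty_or_nonempty with hKe | hKne
  · refine ⟨1, one_pos, fun p hp _ => ?_⟩
    by_contra h
    push_neg at h
    exact absurd (show p ∈ K from ⟨hp, le_of_lt h⟩) (hKe ▸ notMem_empty p)
  · obtain ⟨p₀, hp₀K, hmax⟩ := hKc.exists_isMaxOn hKne hdc.continuousOn
    have hmlt : dQ p₀ < ρ := by
      rcases lt_or_eq_of_le (hb p₀ hp₀K.1) with h | h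
      · exact h
      · exfalso
        have h1 := hA p₀ hp₀K.1 h
        have h2 := hp₀K.2
        simp only [mem_setOf_eq] at h2
        linarith
    refine ⟨ρ - dQ p₀, by linarith, fun p hp hlt => ?_⟩
    by_contra h
    push_neg at h
    have hpK : p ∈ K := ⟨hp, le_of_lt h⟩
    have h9 : dQ p ≤ dQ p₀ := hmax hpK
    linarith

set_option maxHeartbeats 1000000 in
lemma fwd_aux [FiniteDimensional ℝ E] {P Q : Set E}
    (hPc : IsCompact P) (hQc : IsCompact Q) (hPconv : Convex ℝ P) (hQconv : Convex ℝ Q)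
    (hP0 : (0:E) ∈ P) (hQ0 : (0:E) ∈ Q)
    (projP projQ : E → E)
    (hprojP : ∀ x, projP x ∈ P ∧ ‖x - projP x‖ = Metric.infDist x P)
    (hprojQ : ∀ x, projQ x ∈ Q ∧ ‖x - projQ x‖ = Metric.infDist x Q)
    (hopt : Metric.hausdorffDist P Q = sInf {ρ : ℝ | ∃ α : ℝ, 0 < α ∧ ∃ c : E,
        ρ = Metric.hausdorffDist ((fun p => α • p + c) '' P) Q}) :
    ∃ ρ : ℝ, 0 ≤ ρ ∧ ∃ R S : Finset E, ↑R ⊆ P ∧ ↑S ⊆ Q ∧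
      R.card + S.card ≤ Module.finrank ℝ E + 2 ∧
      P ⊆ Q + ρ • Metric.closedBall (0:E) 1 ∧ Q ⊆ P + ρ • Metric.closedBall (0:E) 1 ∧
      (∀ p ∈ R, Metric.infDist p Q = ρ) ∧ (∀ q ∈ S, Metric.infDist q P = ρ) ∧
      (0 : ℝ × E) ∈ convexHull ℝ
        ((fun p => (⟪p - projQ p, p⟫, p - projQ p)) '' ↑R ∪
         (fun q => (⟪projP q - q, projP q⟫, projP q - q)) '' ↑S) := by
  classical
  set T := {ρ : ℝ | ∃ α : ℝ, 0 < α ∧ ∃ c : E,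
      ρ = Metric.hausdorffDist ((fun p => α • p + c) '' P) Q} with hTdef
  set ρ := Metric.hausdorffDist P Q with hρdef
  have hρ0 : 0 ≤ ρ := Metric.hausdorffDist_nonneg
  have hPne : P.Nonempty := ⟨0, hP0⟩
  have hQne : Q.Nonempty := ⟨0, hQ0⟩
  have hfinPQ : EMetric.hausdorffEdist P Q ≠ ⊤ :=
    Metric.hausdorffEdist_ne_top_of_nonempty_of_bounded hPne hQne hPc.isBounded hQc.isBounded
  have hbP : ∀ p ∈ P, Metric.infDist p Q ≤ ρ := fun p hp =>
    Metric.infDist_le_hausdorffDist_of_mem hp hfinPQ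
  have hbQ : ∀ q ∈ Q, Metric.infDist q P ≤ ρ := by
    intro q hq
    have h := Metric.infDist_le_hausdorffDist_of_mem (s := Q) (t := P) hq
      (by rwa [EMetric.hausdorffEdist_comm])
    rwa [Metric.hausdorffDist_comm] at h
  set gmap : E → ℝ × E := fun p => (⟪p - projQ p, p⟫, p - projQ p) with hgmap
  set hmap : E → ℝ × E := fun q => (⟪projP q - q, projP q⟫, projP q - q) with hhmap
  have hprojQc : Continuous projQ := proj_lip' hQconv hprojQ
  have hprojPc : Continuous projP := proj_lip' hPconv hprojP
  have hgc : Continuous gmap :=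
    Continuous.prodMk (Continuous.inner (continuous_id.sub hprojQc) continuous_id)
      (continuous_id.sub hprojQc)
  have hhc : Continuous hmap :=
    Continuous.prodMk (Continuous.inner (hprojPc.sub continuous_id) hprojPc)
      (hprojPc.sub continuous_id)
  set A := P ∩ {p | Metric.infDist p Q = ρ} with hAdef
  set B := Q ∩ {q | Metric.infDist q P = ρ} with hBdef
  have hAc : IsCompact A := hPc.inter_right (isClosed_eq (Metric.continuous_infDist_pt _) continuous_const)
  have hBc : IsCompact B := hQc.inter_right (isClosed_eq (Metric.continuous_infDist_pt _) continuous_const)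
  set G := gmap '' A ∪ hmap '' B with hGdef
  have hGc : IsCompact G := (hAc.image hgc).union (hBc.image hhc)
  have claim : (0 : ℝ × E) ∈ convexHull ℝ G := by
    by_cases hρz : ρ = 0
    · have h0A : (0:E) ∈ A := ⟨hP0, by
        rw [mem_setOf_eq, Metric.infDist_zero_of_mem hQ0, hρz]⟩
      have hpq0 : projQ 0 = 0 := by
        have h1 := (hprojQ 0).2
        rw [Metric.infDist_zero_of_mem hQ0] at h1
        have h2 : (0:E) - projQ 0 = 0 := norm_eq_zero.1 h1
        have := sub_eq_zero.1 h2
        exact this.symm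
      have hg0 : gmap 0 = 0 := by
        simp only [hgmap, hpq0, sub_zero, inner_zero_left]
        rfl
      exact subset_convexHull ℝ G (by
        rw [← hg0]; exact mem_union_left _ (mem_image_of_mem _ h0A))
    · have hρpos : 0 < ρ := lt_of_le_of_ne hρ0 (Ne.symm hρz)
      by_contra hnot
      have hCc : IsCompact (convexHull ℝ G) := isCompact_convexHull_fd hGc
      obtain ⟨f, u, hfu, hu0⟩ :=
        geometric_hahn_banach_closed_point (convex_convexHull ℝ G) hCc.isClosed hnot
      have hu0' : u < 0 := by simpa using hu0
      set ε := -u with hεdef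
      have hε : 0 < ε := by rw [hεdef]; linarith
      have hG : ∀ z ∈ G, f z < -ε := by
        intro z hz
        have h1 := hfu z (subset_convexHull ℝ G hz)
        rw [hεdef, neg_neg]
        exact h1
      clear_value ε
      set t := f (1, (0:E)) with htdef
      set w := (InnerProductSpace.toDual ℝ E).symm (f.comp (ContinuousLinearMap.inr ℝ ℝ E)) with hwdef
      have hfrep : ∀ z : ℝ × E, f z = t * z.1 + ⟪w, z.2⟫ := by
        intro z
        have hz : z = z.1 • ((1:ℝ), (0:E)) + ((0:ℝ), z.2) := by
          apply Prod.ext <;> simp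
        have h2 : ⟪w, z.2⟫ = f ((0:ℝ), z.2) := by
          rw [hwdef, InnerProductSpace.toDual_symm_apply]
          rfl
        calc f z = f (z.1 • ((1:ℝ), (0:E)) + ((0:ℝ), z.2)) := by rw [← hz]
          _ = z.1 * f (1, (0:E)) + f ((0:ℝ), z.2) := by
              rw [map_add, map_smul]; simp [smul_eq_mul]
          _ = t * z.1 + ⟪w, z.2⟫ := by rw [← htdef, h2]; ring
      set ψP : E → ℝ := fun p => ⟪p - projQ p, t • p + w⟫ with hψPdef
      set ψQ : E → ℝ := fun q => ⟪projP q - q, t • projP q + w⟫ with hψQdef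
      have hψPc : Continuous ψP := Continuous.inner (continuous_id.sub hprojQc)
        ((continuous_const.smul continuous_id).add continuous_const)
      have hψQc : Continuous ψQ := Continuous.inner (hprojPc.sub continuous_id)
        ((continuous_const.smul hprojPc).add continuous_const)
      have hψPA : ∀ p ∈ P, Metric.infDist p Q = ρ → ψP p < -ε := by
        intro p hp hd
        have h1 := hG (gmap p) (mem_union_left _ (mem_image_of_mem _ ⟨hp, hd⟩))
        rw [hfrep] at h1
        have h2 : ψP p = t * ⟪p - projQ p, p⟫ + ⟪w, p - projQ p⟫ := by
          rw [hψPdef]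
          simp only
          rw [inner_add_right, real_inner_smul_right, real_inner_comm w]
        rw [h2]
        exact h1
      have hψQB : ∀ q ∈ Q, Metric.infDist q P = ρ → ψQ q < -ε := by
        intro q hq hd
        have h1 := hG (hmap q) (mem_union_right _ (mem_image_of_mem _ ⟨hq, hd⟩))
        rw [hfrep] at h1
        have h2 : ψQ q = t * ⟪projP q - q, projP q⟫ + ⟪w, projP q - q⟫ := by
          rw [hψQdef]
          simp only
          rw [inner_add_right, real_inner_smul_right, real_inner_comm w]
        rw [h2]
        exact h1
      obtain ⟨δ₁, hδ₁, hmP⟩ := margin_aux hPc hψPc (Metric.continuous_infDist_pt Q) hε hbP hψPA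
      obtain ⟨δ₂, hδ₂, hmQ⟩ := margin_aux hQc hψQc (Metric.continuous_infDist_pt P) hε hbQ hψQB
      set δ := min δ₁ δ₂ with hδdef
      have hδ : 0 < δ := lt_min hδ₁ hδ₂
      have hmP' : ∀ p ∈ P, ρ - δ < Metric.infDist p Q → ψP p ≤ -(ε/2) := by
        intro p hp h
        apply hmP p hp
        have h9 : δ ≤ δ₁ := min_le_left _ _
        linarith
      have hmQ' : ∀ q ∈ Q, ρ - δ < Metric.infDist q P → ψQ q ≤ -(ε/2) := by
        intro q hq h
        apply hmQ q hq
        have h9 : δ ≤ δ₂ := min_le_right _ _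
        linarith
      clear_value δ
      obtain ⟨rP, hrPpos, hrP⟩ := hPc.isBounded.subset_closedBall_lt 0 0
      set M := |t| * rP + ‖w‖ + 1 with hMdef
      have hM : 0 < M := by
        have h8 := mul_nonneg (abs_nonneg t) hrPpos.le
        have h9 := norm_nonneg w
        rw [hMdef]
        linarith only [h8, h9]
      have hMb : ∀ p ∈ P, ‖t • p + w‖ ≤ M := by
        intro p hp
        have h1 : ‖p‖ ≤ rP := by
          have := hrP hp
          rwa [Metric.mem_closedBall, dist_zero_right] at this
        calc ‖t • p + w‖ ≤ ‖t • p‖ + ‖w‖ := norm_add_le _ _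
          _ = |t| * ‖p‖ + ‖w‖ := by rw [norm_smul, Real.norm_eq_abs]
          _ ≤ |t| * rP + ‖w‖ := by
              have h8 := mul_le_mul_of_nonneg_left h1 (abs_nonneg t)
              linarith only [h8]
          _ ≤ M := by rw [hMdef]; linarith
      clear_value t w
      clear_value M
      set s := min (min (δ/(2*M)) (ε/(2*M^2))) (1/(2*(|t|+1))) with hsdef
      have hspos : 0 < s := by
        apply lt_min (lt_min (by positivity) (by positivity)) (by positivity)
      have hsM : s * M ≤ δ/2 := by
        have h1 : s ≤ δ/(2*M) := le_trans (min_le_left _ _) (min_le_left _ _)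
        rw [le_div_iff₀ (by positivity)] at h1
        linarith only [h1]
      have hsM2 : s * M^2 ≤ ε/2 := by
        have h1 : s ≤ ε/(2*M^2) := le_trans (min_le_left _ _) (min_le_right _ _)
        rw [le_div_iff₀ (by positivity)] at h1
        linarith only [h1]
      have hst : s * |t| < 1 := by
        have h1 : s ≤ 1/(2*(|t|+1)) := min_le_right _ _
        have h2 : 0 < |t| + 1 := by positivity
        rw [le_div_iff₀ (by positivity)] at h1
        linarith only [h1, hspos, mul_nonneg hspos.le (abs_nonneg t)]
      clear_value s
      set α := 1 + s * t with hαdef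
      have hα : 0 < α := by
        have h2 : -|s*t| ≤ s*t := neg_abs_le _
        have h3 : |s*t| = s*|t| := by rw [abs_mul, abs_of_nonneg hspos.le]
        rw [hαdef]
        linarith only [h2, h3, hst]
      set c := s • w with hcdef
      set κ := max (ρ - δ/2) (Real.sqrt (ρ^2 - s*ε/2)) with hκdef
      have hκ0 : 0 ≤ κ := le_max_of_le_right (Real.sqrt_nonneg _)
      have estP : ∀ p ∈ P, dist (α • p + c) (projQ p) ≤ κ := by
        intro p hp
        set z := t • p + w with hzdef
        have hzM : ‖z‖ ≤ M := hMb p hp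
        have hrw : α • p + c - projQ p = (p - projQ p) + s • z := by
          rw [hαdef, hcdef, hzdef, add_smul, one_smul, smul_add, smul_smul]
          abel
        rw [dist_eq_norm, hrw]
        set v := p - projQ p with hvdef
        have hun : ‖v‖ = Metric.infDist p Q := (hprojQ p).2
        have hsz : ‖s • z‖ ≤ s * M := by
          rw [norm_smul, Real.norm_eq_abs, abs_of_nonneg hspos.le]
          exact mul_le_mul_of_nonneg_left hzM hspos.le
        rcases le_or_gt (Metric.infDist p Q) (ρ - δ) with hcase | hcase
        · calc ‖v + s • z‖ ≤ ‖v‖ + ‖s • z‖ := norm_add_le _ _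
            _ ≤ (ρ - δ) + s * M := by rw [hun]; linarith
            _ ≤ ρ - δ/2 := by linarith
            _ ≤ κ := le_max_left _ _
        · have hψ : ψP p ≤ -(ε/2) := hmP' p hp hcase
          have hinner : ⟪v, s • z⟫ = s * ψP p := real_inner_smul_right _ _ _
          have hsq : ‖v + s • z‖^2 ≤ ρ^2 - s*ε/2 := by
            have h1 : ‖v + s • z‖^2 = ‖v‖^2 + 2*⟪v, s • z⟫ + ‖s • z‖^2 := norm_add_sq_real _ _
            have h4 : ‖v‖^2 ≤ ρ^2 := by
              have h4a : ‖v‖ ≤ ρ := by rw [hun]; exact hbP p hp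
              exact pow_le_pow_left₀ (norm_nonneg v) h4a 2
            have h5 : ‖s • z‖^2 ≤ (s*M)^2 := pow_le_pow_left₀ (norm_nonneg _) hsz 2
            have e7 : ⟪v, s • z⟫ ≤ s * (-(ε/2)) := by
              rw [hinner]
              exact mul_le_mul_of_nonneg_left hψ hspos.le
            have e8 : s * (s * M^2) ≤ s * (ε/2) := mul_le_mul_of_nonneg_left hsM2 hspos.le
            have e9 : ‖s • z‖^2 ≤ s * (s * M^2) := by
              have h6 : (s*M)^2 = s * (s * M^2) := by ring
              linarith only [h5, h6]
            linarith only [h1, h4, e7, e8, e9]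
          have h7 := Real.sqrt_le_sqrt hsq
          rw [Real.sqrt_sq (norm_nonneg _)] at h7
          exact le_trans h7 (le_max_right _ _)
      have estQ : ∀ q ∈ Q, dist q (α • projP q + c) ≤ κ := by
        intro q hq
        set z := t • projP q + w with hzdef
        have hzM : ‖z‖ ≤ M := hMb _ (hprojP q).1
        have hrw : q - (α • projP q + c) = -((projP q - q) + s • z) := by
          rw [hαdef, hcdef, hzdef, add_smul, one_smul, smul_add, smul_smul]
          abel
        rw [dist_eq_norm, hrw, norm_neg]
        set v := projP q - q with hvdef
        have hun : ‖v‖ = Metric.infDist q P := by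
          rw [hvdef, norm_sub_rev]
          exact (hprojP q).2
        have hsz : ‖s • z‖ ≤ s * M := by
          rw [norm_smul, Real.norm_eq_abs, abs_of_nonneg hspos.le]
          exact mul_le_mul_of_nonneg_left hzM hspos.le
        rcases le_or_gt (Metric.infDist q P) (ρ - δ) with hcase | hcase
        · calc ‖v + s • z‖ ≤ ‖v‖ + ‖s • z‖ := norm_add_le _ _
            _ ≤ (ρ - δ) + s * M := by rw [hun]; linarith
            _ ≤ ρ - δ/2 := by linarith
            _ ≤ κ := le_max_left _ _
        · have hψ : ψQ q ≤ -(ε/2) := hmQ' q hq hcase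
          have hinner : ⟪v, s • z⟫ = s * ψQ q := real_inner_smul_right _ _ _
          have hsq : ‖v + s • z‖^2 ≤ ρ^2 - s*ε/2 := by
            have h1 : ‖v + s • z‖^2 = ‖v‖^2 + 2*⟪v, s • z⟫ + ‖s • z‖^2 := norm_add_sq_real _ _
            have h4 : ‖v‖^2 ≤ ρ^2 := by
              have h4a : ‖v‖ ≤ ρ := by rw [hun]; exact hbQ q hq
              exact pow_le_pow_left₀ (norm_nonneg v) h4a 2
            have h5 : ‖s • z‖^2 ≤ (s*M)^2 := pow_le_pow_left₀ (norm_nonneg _) hsz 2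
            have e7 : ⟪v, s • z⟫ ≤ s * (-(ε/2)) := by
              rw [hinner]
              exact mul_le_mul_of_nonneg_left hψ hspos.le
            have e8 : s * (s * M^2) ≤ s * (ε/2) := mul_le_mul_of_nonneg_left hsM2 hspos.le
            have e9 : ‖s • z‖^2 ≤ s * (s * M^2) := by
              have h6 : (s*M)^2 = s * (s * M^2) := by ring
              linarith only [h5, h6]
            linarith only [h1, h4, e7, e8, e9]
          have h7 := Real.sqrt_le_sqrt hsq
          rw [Real.sqrt_sq (norm_nonneg _)] at h7
          exact le_trans h7 (le_max_right _ _)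
      have hHDκ : Metric.hausdorffDist ((fun p => α • p + c) '' P) Q ≤ κ := by
        apply Metric.hausdorffDist_le_of_mem_dist hκ0
        · rintro x ⟨p, hp, rfl⟩
          exact ⟨projQ p, (hprojQ p).1, estP p hp⟩
        · intro q hq
          exact ⟨α • projP q + c, ⟨projP q, (hprojP q).1, rfl⟩, estQ q hq⟩
      have hκρ : κ < ρ := by
        apply max_lt (by linarith)
        rw [Real.sqrt_lt' hρpos]
        have h8 : 0 < s * ε := mul_pos hspos hε
        linarith only [h8]
      have hmem : Metric.hausdorffDist ((fun p => α • p + c) '' P) Q ∈ T := ⟨α, hα, c, rfl⟩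
      have hbdd : BddBelow T := by
        refine ⟨0, fun x hx => ?_⟩
        obtain ⟨α', hα', c', hx⟩ := hx
        rw [hx]
        exact Metric.hausdorffDist_nonneg
      have hle := csInf_le hbdd hmem
      rw [← hopt] at hle
      linarith
  -- extraction
  rw [convexHull_eq_union] at claim
  simp only [mem_iUnion] at claim
  obtain ⟨tt, htG, hai, h0t⟩ := claim
  have hcard : tt.card ≤ Module.finrank ℝ E + 2 := by
    have h1 := hai.card_le_finrank_succ
    rw [Fintype.card_coe] at h1
    refine h1.trans ?_
    have h2 : Module.finrank ℝ (vectorSpan ℝ (Set.range ((↑) : tt → ℝ × E)))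
        ≤ Module.finrank ℝ (ℝ × E) := Submodule.finrank_le _
    rw [Module.finrank_prod, Module.finrank_self] at h2
    omega
  set pg : ℝ × E → E := fun z => if h : ∃ p, p ∈ A ∧ gmap p = z then h.choose else 0 with hpgdef
  set ph : ℝ × E → E := fun z => if h : ∃ q, q ∈ B ∧ hmap q = z then h.choose else 0 with hphdef
  have hpg : ∀ z ∈ gmap '' A, pg z ∈ A ∧ gmap (pg z) = z := by
    intro z hz
    obtain ⟨p, hp, he⟩ := hz
    have hex : ∃ p, p ∈ A ∧ gmap p = z := ⟨p, hp, he⟩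
    rw [hpgdef]
    simp only [dif_pos hex]
    exact hex.choose_spec
  have hph : ∀ z ∈ hmap '' B, ph z ∈ B ∧ hmap (ph z) = z := by
    intro z hz
    obtain ⟨q, hq, he⟩ := hz
    have hex : ∃ q, q ∈ B ∧ hmap q = z := ⟨q, hq, he⟩
    rw [hphdef]
    simp only [dif_pos hex]
    exact hex.choose_spec
  set tt₁ := tt.filter (fun z => z ∈ gmap '' A) with htt₁
  set tt₂ := tt.filter (fun z => ¬ z ∈ gmap '' A) with htt₂
  set R := tt₁.image pg with hRdef
  set S := tt₂.image ph with hSdef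
  have htt₂B : ∀ z ∈ tt₂, z ∈ hmap '' B := by
    intro z hz
    rw [htt₂, Finset.mem_filter] at hz
    rcases htG hz.1 with h | h
    · exact absurd h hz.2
    · exact h
  have hRA : ∀ p ∈ R, p ∈ A := by
    intro p hp
    rw [hRdef] at hp
    obtain ⟨z, hz, rfl⟩ := Finset.mem_image.1 hp
    rw [htt₁, Finset.mem_filter] at hz
    exact (hpg z hz.2).1
  have hSB : ∀ q ∈ S, q ∈ B := by
    intro q hq
    rw [hSdef] at hq
    obtain ⟨z, hz, rfl⟩ := Finset.mem_image.1 hq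
    exact (hph z (htt₂B z hz)).1
  have hcover : ↑tt ⊆ gmap '' ↑R ∪ hmap '' ↑S := by
    intro z hz
    rw [Finset.mem_coe] at hz
    by_cases h : z ∈ gmap '' A
    · left
      have hz₁ : z ∈ tt₁ := by rw [htt₁, Finset.mem_filter]; exact ⟨hz, h⟩
      exact ⟨pg z, by
        rw [hRdef]
        exact Finset.mem_coe.2 (Finset.mem_image_of_mem pg hz₁), (hpg z h).2⟩
    · right
      have hz₂ : z ∈ tt₂ := by rw [htt₂, Finset.mem_filter]; exact ⟨hz, h⟩
      exact ⟨ph z, by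
        rw [hSdef]
        exact Finset.mem_coe.2 (Finset.mem_image_of_mem ph hz₂), (hph z (htt₂B z hz₂)).2⟩
  have hball : ρ • Metric.closedBall (0:E) 1 = Metric.closedBall (0:E) ρ := by
    rw [_root_.smul_closedBall _ _ zero_le_one, smul_zero, Real.norm_eq_abs, abs_of_nonneg hρ0, mul_one]
  have hPsub : P ⊆ Q + ρ • Metric.closedBall (0:E) 1 := by
    intro p hp
    rw [hball]
    obtain ⟨q, hqQ, hqd⟩ := hQc.exists_infDist_eq_dist hQne p
    refine ⟨q, hqQ, p - q, ?_, by module⟩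
    rw [Metric.mem_closedBall, dist_zero_right, ← dist_eq_norm]
    rw [← hqd]
    exact hbP p hp
  have hQsub : Q ⊆ P + ρ • Metric.closedBall (0:E) 1 := by
    intro q hq
    rw [hball]
    obtain ⟨p, hpP, hpd⟩ := hPc.exists_infDist_eq_dist hPne q
    refine ⟨p, hpP, q - p, ?_, by module⟩
    rw [Metric.mem_closedBall, dist_zero_right, ← dist_eq_norm, ← hpd]
    exact hbQ q hq
  refine ⟨ρ, hρ0, R, S, fun p hp => (hRA p hp).1, fun q hq => (hSB q hq).1, ?_, hPsub, hQsub,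
    fun p hp => (hRA p hp).2, fun q hq => (hSB q hq).2, ?_⟩
  · calc R.card + S.card ≤ tt₁.card + tt₂.card :=
        Nat.add_le_add (Finset.card_image_le) (Finset.card_image_le)
      _ = tt.card := Finset.card_filter_add_card_filter_not _
      _ ≤ Module.finrank ℝ E + 2 := hcard
  · exact convexHull_mono hcover h0t

lemma lb_aux {P Q : Set E}
    (hPc : IsCompact P) (hQc : IsCompact Q)
    (hPconv : Convex ℝ P) (hQconv : Convex ℝ Q)
    (hPne : P.Nonempty) (hQne : Q.Nonempty)
    (projP projQ : E → E)
    (hprojP : ∀ x, projP x ∈ P ∧ ‖x - projP x‖ = Metric.infDist x P)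
    (hprojQ : ∀ x, projQ x ∈ Q ∧ ‖x - projQ x‖ = Metric.infDist x Q)
    {ρ : ℝ} (hρpos : 0 < ρ) {R S : Finset E} (hRP : ↑R ⊆ P) (hSQ : ↑S ⊆ Q)
    (hRd : ∀ p ∈ R, Metric.infDist p Q = ρ) (hSd : ∀ q ∈ S, Metric.infDist q P = ρ)
    (hhull : (0 : ℝ × E) ∈ convexHull ℝ
      ((fun p => (⟪p - projQ p, p⟫, p - projQ p)) '' ↑R ∪
       (fun q => (⟪projP q - q, projP q⟫, projP q - q)) '' ↑S))
    (α : ℝ) (hα : 0 < α) (c : E) :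
    ρ ≤ Metric.hausdorffDist ((fun p => α • p + c) '' P) Q := by
  set img := (fun p => α • p + c) '' P with himg
  have himgc : IsCompact img := hPc.image ((continuous_const.smul continuous_id).add continuous_const)
  have himgne : img.Nonempty := hPne.image _
  have hfin : EMetric.hausdorffEdist img Q ≠ ⊤ :=
    Metric.hausdorffEdist_ne_top_of_nonempty_of_bounded himgne hQne himgc.isBounded hQc.isBounded
  set HD := Metric.hausdorffDist img Q with hHD
  set F : ℝ × E → ℝ := fun z => ρ ^ 2 + (α - 1) * z.1 + ⟪z.2, c⟫ with hF
  -- per-point bounds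
  have keyP : ∀ p ∈ R, F (⟪p - projQ p, p⟫, p - projQ p) ≤ ρ * HD := by
    intro p hp
    set u := p - projQ p with hu
    have hun : ‖u‖ = ρ := by rw [hu, (hprojQ p).2, hRd p hp]
    have hmem : α • p + c ∈ img := ⟨p, hRP hp, rfl⟩
    obtain ⟨y₀, hy₀Q, hy₀d⟩ := hQc.exists_infDist_eq_dist hQne (α • p + c)
    have hVI : ⟪u, y₀ - projQ p⟫ ≤ 0 := vi_of_nearest' hQconv (hprojQ p).1 (hprojQ p).2 hy₀Q
    have hinner : F (⟪u, p⟫, u) ≤ ⟪u, α • p + c - y₀⟫ := by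
      have e1 : ⟪u, α • p + c - y₀⟫ = α * ⟪u, p⟫ + ⟪u, c⟫ - ⟪u, y₀⟫ := by
        rw [inner_sub_right, inner_add_right, real_inner_smul_right]
      have e2 : ⟪u, y₀⟫ ≤ ⟪u, p⟫ - ρ ^ 2 := by
        have e3 : ⟪u, y₀ - projQ p⟫ = ⟪u, y₀⟫ - ⟪u, projQ p⟫ := inner_sub_right _ _ _
        have e4 : ⟪u, projQ p⟫ = ⟪u, p⟫ - ρ ^ 2 := by
          have : projQ p = p - u := by rw [hu]; abel
          rw [this, inner_sub_right, real_inner_self_eq_norm_sq, hun]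
        linarith
      simp only [hF]
      linarith
    have hCS : ⟪u, α • p + c - y₀⟫ ≤ ρ * ‖α • p + c - y₀‖ := by
      have := real_inner_le_norm u (α • p + c - y₀)
      rwa [hun] at this
    have hdist : Metric.infDist (α • p + c) Q ≤ HD :=
      Metric.infDist_le_hausdorffDist_of_mem hmem hfin
    have : ‖α • p + c - y₀‖ = Metric.infDist (α • p + c) Q := by
      rw [hy₀d, dist_eq_norm]
    nlinarith [hinner, hCS, this, hdist, hρpos]
  have keyQ : ∀ q ∈ S, F (⟪projP q - q, projP q⟫, projP q - q) ≤ ρ * HD := by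
    intro q hq
    set v := projP q - q with hv
    have hvn : ‖v‖ = ρ := by
      have : ‖q - projP q‖ = ρ := by rw [(hprojP q).2, hSd q hq]
      rw [← this, hv, norm_sub_rev]
    obtain ⟨x₀, hx₀img, hx₀d⟩ := himgc.exists_infDist_eq_dist himgne q
    obtain ⟨p', hp'P, rfl⟩ := hx₀img
    have hVI : ⟪q - projP q, p' - projP q⟫ ≤ 0 :=
      vi_of_nearest' hPconv (hprojP q).1 (hprojP q).2 hp'P
    have hinner : F (⟪v, projP q⟫, v) ≤ ⟪-v, q - (α • p' + c)⟫ := by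
      have e1 : ⟪-v, q - (α • p' + c)⟫ = -⟪v, q⟫ + α * ⟪v, p'⟫ + ⟪v, c⟫ := by
        rw [inner_neg_left, inner_sub_right, inner_add_right, real_inner_smul_right]; ring
      have e2 : ⟪v, projP q⟫ ≤ ⟪v, p'⟫ := by
        have e3 : ⟪q - projP q, p' - projP q⟫ = -⟪v, p'⟫ + ⟪v, projP q⟫ := by
          have : q - projP q = -v := by rw [hv]; abel
          rw [this, inner_neg_left, inner_sub_right]; ring
        linarith
      have e4 : ⟪v, projP q⟫ - ⟪v, q⟫ = ρ ^ 2 := by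
        rw [← inner_sub_right]
        have : projP q - q = v := hv.symm
        rw [this, real_inner_self_eq_norm_sq, hvn]
      have e5 : α * ⟪v, projP q⟫ ≤ α * ⟪v, p'⟫ := by
        exact mul_le_mul_of_nonneg_left e2 hα.le
      simp only [hF]
      nlinarith
    have hCS : ⟪-v, q - (α • p' + c)⟫ ≤ ρ * ‖q - (α • p' + c)‖ := by
      have h6 := real_inner_le_norm (-v) (q - (α • p' + c))
      rwa [norm_neg, hvn] at h6
    have hdist : Metric.infDist q img ≤ HD := by
      have h7 := Metric.infDist_le_hausdorffDist_of_mem (s := Q) (t := img) (hSQ hq)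
        (by rwa [EMetric.hausdorffEdist_comm])
      rwa [Metric.hausdorffDist_comm] at h7
    have h8 : ‖q - (α • p' + c)‖ = Metric.infDist q img := by rw [hx₀d, dist_eq_norm]
    nlinarith [hinner, hCS, h8, hdist, hρpos]
  -- combine via convex combination
  rw [convexHull_eq] at hhull
  obtain ⟨ι, tt, ws, zs, hw0, hw1, hz, hcm⟩ := hhull
  rw [Finset.centerMass_eq_of_sum_1 _ _ hw1] at hcm
  have hfst : (∑ i ∈ tt, ws i * (zs i).1) = 0 := by
    have := congrArg Prod.fst hcm
    simpa [Prod.fst_sum] using this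
  have hsnd : (∑ i ∈ tt, ws i • (zs i).2) = (0 : E) := by
    have := congrArg Prod.snd hcm
    simpa [Prod.snd_sum] using this
  have hkey : ∀ i ∈ tt, F (zs i) ≤ ρ * HD := by
    intro i hi
    rcases hz i hi with ⟨p, hp, hpe⟩ | ⟨q, hq, hqe⟩
    · rw [← hpe]; exact keyP p hp
    · rw [← hqe]; exact keyQ q hq
  have hsum : ∑ i ∈ tt, ws i * F (zs i) = ρ ^ 2 := by
    have expand : ∀ i, ws i * F (zs i)
        = ws i * ρ ^ 2 + (α - 1) * (ws i * (zs i).1) + ⟪ws i • (zs i).2, c⟫ := by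
      intro i
      simp only [hF, real_inner_smul_left]
      ring
    rw [Finset.sum_congr rfl fun i _ => expand i]
    rw [Finset.sum_add_distrib, Finset.sum_add_distrib, ← Finset.sum_mul,
      ← Finset.mul_sum, ← sum_inner, hw1, hfst, hsnd]
    simp
  have hfinal : ρ ^ 2 ≤ ρ * HD := by
    rw [← hsum]
    calc ∑ i ∈ tt, ws i * F (zs i) ≤ ∑ i ∈ tt, ws i * (ρ * HD) :=
          Finset.sum_le_sum fun i hi => mul_le_mul_of_nonneg_left (hkey i hi) (hw0 i hi)
      _ = ρ * HD := by rw [← Finset.sum_mul, hw1, one_mul]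
  nlinarith [hfinal, hρpos]

end Helpers



/-- **Optimality criterion for Hausdorff matching under homothetics.**
Let `P, Q ⊆ ℝ^d` be convex bodies with `0` in their interiors. Then `P` is in optimal
homothetic position w.r.t. `Q` (i.e. `δ₂(P,Q) = δ_H(P,Q) := inf { δ₂(αP + c, Q) : α > 0, c }`)
iff there exist `ρ ≥ 0` and finite `R ⊆ P`, `S ⊆ Q` with `|R| + |S| ≤ d + 2` such that
(1) `P ⊆ Q + ρB₂` and `Q ⊆ P + ρB₂`;
(2) `d₂(p,Q) = ρ` for all `p ∈ R` and `d₂(q,P) = ρ` for all `q ∈ S`;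
(3) `0 ∈ conv({(⟪p − Π_Q p, p⟫, p − Π_Q p) : p ∈ R} ∪ {(⟪Π_P q − q, Π_P q⟫, Π_P q − q) : q ∈ S})`. -/
theorem optimal_homothetic_position_iff
    (d : ℕ) (P Q : Set (EuclideanSpace ℝ (Fin d)))
    (hPc : IsCompact P) (hQc : IsCompact Q)
    (hPconv : Convex ℝ P) (hQconv : Convex ℝ Q)
    (h0P : (0 : EuclideanSpace ℝ (Fin d)) ∈ interior P)
    (h0Q : (0 : EuclideanSpace ℝ (Fin d)) ∈ interior Q)
    (projP projQ : EuclideanSpace ℝ (Fin d) → EuclideanSpace ℝ (Fin d))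
    (hprojP : ∀ x, projP x ∈ P ∧ ‖x - projP x‖ = Metric.infDist x P)
    (hprojQ : ∀ x, projQ x ∈ Q ∧ ‖x - projQ x‖ = Metric.infDist x Q) :
    (Metric.hausdorffDist P Q
        = sInf {ρ : ℝ | ∃ α : ℝ, 0 < α ∧ ∃ c : EuclideanSpace ℝ (Fin d),
            ρ = Metric.hausdorffDist ((fun p => α • p + c) '' P) Q})
      ↔ ∃ ρ : ℝ, 0 ≤ ρ ∧ ∃ R S : Finset (EuclideanSpace ℝ (Fin d)),
          ↑R ⊆ P ∧ ↑S ⊆ Q ∧ R.card + S.card ≤ d + 2 ∧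
          P ⊆ Q + ρ • Metric.closedBall (0 : EuclideanSpace ℝ (Fin d)) 1 ∧
          Q ⊆ P + ρ • Metric.closedBall (0 : EuclideanSpace ℝ (Fin d)) 1 ∧
          (∀ p ∈ R, Metric.infDist p Q = ρ) ∧
          (∀ q ∈ S, Metric.infDist q P = ρ) ∧
          (0 : ℝ × EuclideanSpace ℝ (Fin d)) ∈ convexHull ℝ
            ((fun p => (⟪p - projQ p, p⟫, p - projQ p)) '' ↑R ∪
             (fun q => (⟪projP q - q, projP q⟫, projP q - q)) '' ↑S) := by
  constructor
  · intro hopt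
    obtain ⟨ρ, hρ0, R, S, hRP, hSQ, hcard, hPQ, hQP, hRd, hSd, hhull⟩ :=
      fwd_aux hPc hQc hPconv hQconv (interior_subset h0P) (interior_subset h0Q)
        projP projQ hprojP hprojQ hopt
    refine ⟨ρ, hρ0, R, S, hRP, hSQ, ?_, hPQ, hQP, hRd, hSd, hhull⟩
    rwa [finrank_euclideanSpace_fin] at hcard
  · rintro ⟨ρ, hρ, R, S, hRP, hSQ, _hcard, hPQ, hQP, hRd, hSd, hhull⟩
    have hPne : P.Nonempty := ⟨0, interior_subset h0P⟩
    have hQne : Q.Nonempty := ⟨0, interior_subset h0Q⟩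
    have hball : ρ • Metric.closedBall (0 : EuclideanSpace ℝ (Fin d)) 1
        = Metric.closedBall (0 : EuclideanSpace ℝ (Fin d)) ρ := by
      rw [_root_.smul_closedBall _ _ zero_le_one, smul_zero, Real.norm_eq_abs,
        abs_of_nonneg hρ, mul_one]
    rw [hball] at hPQ hQP
    have hub : Metric.hausdorffDist P Q ≤ ρ := by
      apply Metric.hausdorffDist_le_of_mem_dist hρ
      · intro x hx
        obtain ⟨q, hq, b, hb, he⟩ := hPQ hx
        refine ⟨q, hq, ?_⟩
        rw [Metric.mem_closedBall, dist_zero_right] at hb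
        rw [← he, dist_eq_norm]
        simpa using hb
      · intro x hx
        obtain ⟨p, hp, b, hb, he⟩ := hQP hx
        refine ⟨p, hp, ?_⟩
        rw [Metric.mem_closedBall, dist_zero_right] at hb
        rw [← he, dist_eq_norm]
        simpa using hb
    have lb : ∀ α : ℝ, 0 < α → ∀ c : EuclideanSpace ℝ (Fin d),
        ρ ≤ Metric.hausdorffDist ((fun p => α • p + c) '' P) Q := by
      intro α hα c
      rcases eq_or_lt_of_le hρ with h0 | hρpos
      · rw [← h0]
        exact Metric.hausdorffDist_nonneg
      · exact lb_aux hPc hQc hPconv hQconv hPne hQne projP projQ hprojP hprojQ hρpos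
          hRP hSQ hRd hSd hhull α hα c
    have himg1 : ((fun p => (1:ℝ) • p + (0 : EuclideanSpace ℝ (Fin d))) '' P) = P := by
      ext x
      simp
    have hEq : Metric.hausdorffDist P Q = ρ := by
      apply le_antisymm hub
      have h1 := lb 1 one_pos 0
      rwa [himg1] at h1
    rw [hEq]
    apply le_antisymm
    · refine le_csInf ⟨ρ, 1, one_pos, 0, ?_⟩ ?_
      · rw [himg1, hEq]
      · rintro x ⟨α, hα, c, rfl⟩
        exact lb α hα c
    · apply csInf_le
      · refine ⟨0, ?_⟩
        rintro x ⟨α, hα, c, rfl⟩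
        exact Metric.hausdorffDist_nonneg
      · exact ⟨1, one_pos, 0, by rw [himg1, hEq]⟩
end

section
/- Let P, Q ⊆ ℝ^d (Euclidean) be convex bodies containing the origin in their interiors, and set ᾱ := D(Q)/D(P) and c̄ := r(Q) − ᾱ·r(P). Then δ₂( ᾱP + c̄ , Q ) ≤ (3√d + 1) · δ_H(P,Q). -/
/-- The "lower left" corner `r(P)` of the bounding box of `P`: `r(P)_i = min_{x ∈ P} x_i`. -/
noncomputable def bboxLower {d : ℕ} (P : Set (EuclideanSpace ℝ (Fin d))) :
    EuclideanSpace ℝ (Fin d) :=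
  WithLp.toLp 2 fun i => sInf ((fun x => x i) '' P)

/-- The "upper right" corner `s(P)` of the bounding box of `P`: `s(P)_i = max_{x ∈ P} x_i`. -/
noncomputable def bboxUpper {d : ℕ} (P : Set (EuclideanSpace ℝ (Fin d))) :
    EuclideanSpace ℝ (Fin d) :=
  WithLp.toLp 2 fun i => sSup ((fun x => x i) '' P)

/-- The diameter `D(P) = ‖s(P) − r(P)‖₂` of the bounding box of `P`. -/
noncomputable def bboxDiam {d : ℕ} (P : Set (EuclideanSpace ℝ (Fin d))) : ℝ :=
  ‖bboxUpper P - bboxLower P‖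

/-- The Hausdorff distance up to homothetics:
`δ_H(A,B) = inf { δ₂(αA + c, B) : α > 0, c ∈ ℝ^d }`. -/
noncomputable def deltaH {d : ℕ} (A B : Set (EuclideanSpace ℝ (Fin d))) : ℝ :=
  sInf {ρ : ℝ | ∃ α : ℝ, 0 < α ∧ ∃ c : EuclideanSpace ℝ (Fin d),
    ρ = Metric.hausdorffDist ((fun a => α • a + c) '' A) B}

open Metric

section Helpers


lemma coord_abs_le_norm {d : ℕ} (x : EuclideanSpace ℝ (Fin d)) (i : Fin d) : |x i| ≤ ‖x‖ := by
  rw [EuclideanSpace.norm_eq]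
  have h1 : |x i| = √(‖x i‖^2) := by rw [Real.norm_eq_abs, sq_abs, Real.sqrt_sq_eq_abs]
  rw [h1]
  exact Real.sqrt_le_sqrt (Finset.single_le_sum (f := fun j => ‖x j‖^2)
    (fun j _ => sq_nonneg _) (Finset.mem_univ i))

lemma norm_le_sqrt_mul {d : ℕ} (u : EuclideanSpace ℝ (Fin d)) {C : ℝ} (hC : 0 ≤ C)
    (h : ∀ i, |u i| ≤ C) : ‖u‖ ≤ Real.sqrt d * C := by
  rw [EuclideanSpace.norm_eq]
  have : ∑ i, ‖u i‖^2 ≤ (d : ℝ) * C^2 := by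
    calc ∑ i, ‖u i‖^2 ≤ ∑ _i : Fin d, C^2 := by
          apply Finset.sum_le_sum
          intro i _
          rw [Real.norm_eq_abs]
          exact pow_le_pow_left₀ (abs_nonneg _) (h i) 2
      _ = (d : ℝ) * C^2 := by simp [Finset.sum_const, mul_comm]
  calc √(∑ i, ‖u i‖^2) ≤ √((d:ℝ) * C^2) := Real.sqrt_le_sqrt this
    _ = Real.sqrt d * C := by rw [Real.sqrt_mul (Nat.cast_nonneg d), Real.sqrt_sq hC]

lemma norm_le_norm_coord {d : ℕ} (u v : EuclideanSpace ℝ (Fin d))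
    (h : ∀ i, |u i| ≤ |v i|) : ‖u‖ ≤ ‖v‖ := by
  rw [EuclideanSpace.norm_eq, EuclideanSpace.norm_eq]
  apply Real.sqrt_le_sqrt
  apply Finset.sum_le_sum
  intro i _
  rw [Real.norm_eq_abs, Real.norm_eq_abs]
  exact pow_le_pow_left₀ (abs_nonneg _) (h i) 2

variable {d : ℕ} {P A B : Set (EuclideanSpace ℝ (Fin d))}

lemma coordImage_compact (hP : IsCompact P) (i : Fin d) :
    IsCompact ((fun x => x i) '' P) := hP.image (EuclideanSpace.proj i).continuous

lemma bboxLower_le (hP : IsCompact P) {x} (hx : x ∈ P) (i : Fin d) :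
    bboxLower P i ≤ x i :=
  csInf_le (coordImage_compact hP i).bddBelow ⟨x, hx, rfl⟩

lemma le_bboxUpper (hP : IsCompact P) {x} (hx : x ∈ P) (i : Fin d) :
    x i ≤ bboxUpper P i :=
  le_csSup (coordImage_compact hP i).bddAbove ⟨x, hx, rfl⟩

lemma bboxLower_mem (hP : IsCompact P) (hne : P.Nonempty) (i : Fin d) :
    ∃ x ∈ P, x i = bboxLower P i := by
  have := (coordImage_compact hP i).sInf_mem (hne.image _)
  obtain ⟨x, hx, hxi⟩ := this
  exact ⟨x, hx, hxi⟩

lemma bboxUpper_mem (hP : IsCompact P) (hne : P.Nonempty) (i : Fin d) :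
    ∃ x ∈ P, x i = bboxUpper P i := by
  have := (coordImage_compact hP i).sSup_mem (hne.image _)
  obtain ⟨x, hx, hxi⟩ := this
  exact ⟨x, hx, hxi⟩

/-- one-sided coordinate stability of the lower corner -/
lemma bboxLower_le_hd (hA : IsCompact A) (hAne : A.Nonempty) (hB : IsCompact B)
    (hBne : B.Nonempty) (i : Fin d) :
    bboxLower A i ≤ bboxLower B i + hausdorffDist A B := by
  obtain ⟨b, hbB, hbi⟩ := bboxLower_mem hB hBne i
  have hne : EMetric.hausdorffEdist A B ≠ ⊤ :=
    hausdorffEdist_ne_top_of_nonempty_of_bounded hAne hBne hA.isBounded hB.isBounded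
  have h1 : infDist b A ≤ hausdorffDist B A :=
    infDist_le_hausdorffDist_of_mem hbB (by rw [EMetric.hausdorffEdist_comm]; exact hne)
  obtain ⟨a, haA, hda⟩ := hA.exists_infDist_eq_dist hAne b
  have hdab : dist b a ≤ hausdorffDist A B := by
    rw [hausdorffDist_comm, ← hda]; exact h1
  have hcoord : |a i - b i| ≤ dist b a := by
    rw [dist_comm, dist_eq_norm]
    simpa using coord_abs_le_norm (a - b) i
  have : bboxLower A i ≤ a i := bboxLower_le hA haA i
  have : a i - b i ≤ dist b a := (abs_le.mp hcoord).2
  linarith [bboxLower_le hA haA i, hbi ▸ this]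

lemma le_bboxUpper_hd (hA : IsCompact A) (hAne : A.Nonempty) (hB : IsCompact B)
    (hBne : B.Nonempty) (i : Fin d) :
    bboxUpper B i - hausdorffDist A B ≤ bboxUpper A i := by
  obtain ⟨b, hbB, hbi⟩ := bboxUpper_mem hB hBne i
  have hne : EMetric.hausdorffEdist A B ≠ ⊤ :=
    hausdorffEdist_ne_top_of_nonempty_of_bounded hAne hBne hA.isBounded hB.isBounded
  have h1 : infDist b A ≤ hausdorffDist B A :=
    infDist_le_hausdorffDist_of_mem hbB (by rw [EMetric.hausdorffEdist_comm]; exact hne)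
  obtain ⟨a, haA, hda⟩ := hA.exists_infDist_eq_dist hAne b
  have hdab : dist b a ≤ hausdorffDist A B := by
    rw [hausdorffDist_comm, ← hda]; exact h1
  have hcoord : |b i - a i| ≤ dist b a := by
    rw [dist_eq_norm]
    simpa using coord_abs_le_norm (b - a) i
  have h2 : b i - a i ≤ dist b a := (abs_le.mp hcoord).2
  have h3 : a i ≤ bboxUpper A i := le_bboxUpper hA haA i
  linarith [hbi ▸ h2]

lemma bboxLower_norm_sub (hA : IsCompact A) (hAne : A.Nonempty) (hB : IsCompact B)
    (hBne : B.Nonempty) :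
    ‖bboxLower A - bboxLower B‖ ≤ Real.sqrt d * hausdorffDist A B := by
  apply norm_le_sqrt_mul _ hausdorffDist_nonneg
  intro i
  have h1 := bboxLower_le_hd hA hAne hB hBne i
  have h2 := bboxLower_le_hd hB hBne hA hAne i
  rw [hausdorffDist_comm] at h2
  have : (bboxLower A - bboxLower B) i = bboxLower A i - bboxLower B i := by
    simp [PiLp.sub_apply]
  rw [this, abs_le]
  constructor <;> linarith

lemma bboxUpper_norm_sub (hA : IsCompact A) (hAne : A.Nonempty) (hB : IsCompact B)
    (hBne : B.Nonempty) :
    ‖bboxUpper A - bboxUpper B‖ ≤ Real.sqrt d * hausdorffDist A B := by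
  apply norm_le_sqrt_mul _ hausdorffDist_nonneg
  intro i
  have h1 := le_bboxUpper_hd hA hAne hB hBne i
  have h2 := le_bboxUpper_hd hB hBne hA hAne i
  rw [hausdorffDist_comm] at h2
  have : (bboxUpper A - bboxUpper B) i = bboxUpper A i - bboxUpper B i := by
    simp [PiLp.sub_apply]
  rw [this, abs_le]
  constructor <;> linarith

/-- every point of A is within bboxDiam of the lower corner -/
lemma norm_sub_bboxLower_le (hA : IsCompact A) {a} (ha : a ∈ A) :
    ‖a - bboxLower A‖ ≤ bboxDiam A := by
  apply norm_le_norm_coord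
  intro i
  have h1 := bboxLower_le hA ha i
  have h2 := le_bboxUpper hA ha i
  have e1 : (a - bboxLower A) i = a i - bboxLower A i := by simp [PiLp.sub_apply]
  have e2 : (bboxUpper A - bboxLower A) i = bboxUpper A i - bboxLower A i := by
    simp [PiLp.sub_apply]
  rw [e1, e2, abs_of_nonneg (by linarith), abs_of_nonneg (by linarith)]
  linarith

lemma coordImage_affine (P : Set (EuclideanSpace ℝ (Fin d))) (α : ℝ)
    (c : EuclideanSpace ℝ (Fin d)) (i : Fin d) :
    (fun x => x i) '' ((fun x => α • x + c) '' P)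
      = (fun y => α * y + c i) '' ((fun x => x i) '' P) := by
  rw [Set.image_image, Set.image_image]
  apply Set.image_congr
  intro x _
  simp [PiLp.add_apply, PiLp.smul_apply, smul_eq_mul]

lemma bboxLower_affine (hP : IsCompact P) (hne : P.Nonempty) {α : ℝ} (hα : 0 < α)
    (c : EuclideanSpace ℝ (Fin d)) :
    bboxLower ((fun x => α • x + c) '' P) = α • bboxLower P + c := by
  refine PiLp.ext fun i => ?_
  show sInf _ = _
  rw [coordImage_affine]
  have hL : IsLeast ((fun x => x i) '' P) (bboxLower P i) :=
    (coordImage_compact hP i).isLeast_sInf (hne.image _)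
  have hL2 : IsLeast ((fun y => α * y + c i) '' ((fun x => x i) '' P))
      (α * bboxLower P i + c i) := by
    constructor
    · exact ⟨_, hL.1, rfl⟩
    · rintro y ⟨z, hz, rfl⟩
      have := hL.2 hz
      show α * bboxLower P i + c i ≤ α * z + c i
      nlinarith
  rw [hL2.csInf_eq]
  simp [PiLp.add_apply, PiLp.smul_apply, smul_eq_mul]

lemma bboxUpper_affine (hP : IsCompact P) (hne : P.Nonempty) {α : ℝ} (hα : 0 < α)
    (c : EuclideanSpace ℝ (Fin d)) :
    bboxUpper ((fun x => α • x + c) '' P) = α • bboxUpper P + c := by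
  refine PiLp.ext fun i => ?_
  show sSup _ = _
  rw [coordImage_affine]
  have hL : IsGreatest ((fun x => x i) '' P) (bboxUpper P i) :=
    (coordImage_compact hP i).isGreatest_sSup (hne.image _)
  have hL2 : IsGreatest ((fun y => α * y + c i) '' ((fun x => x i) '' P))
      (α * bboxUpper P i + c i) := by
    constructor
    · exact ⟨_, hL.1, rfl⟩
    · rintro y ⟨z, hz, rfl⟩
      have := hL.2 hz
      show α * z + c i ≤ α * bboxUpper P i + c i
      nlinarith
  rw [hL2.csSup_eq]
  simp [PiLp.add_apply, PiLp.smul_apply, smul_eq_mul]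

lemma bboxDiam_affine (hP : IsCompact P) (hne : P.Nonempty) {α : ℝ} (hα : 0 < α)
    (c : EuclideanSpace ℝ (Fin d)) :
    bboxDiam ((fun x => α • x + c) '' P) = α * bboxDiam P := by
  unfold bboxDiam
  rw [bboxLower_affine hP hne hα c, bboxUpper_affine hP hne hα c]
  have : α • bboxUpper P + c - (α • bboxLower P + c) = α • (bboxUpper P - bboxLower P) := by
    module
  rw [this, norm_smul, Real.norm_eq_abs, abs_of_pos hα]

lemma bboxDiam_pos (hd : 0 < d) (hP : IsCompact P)
    (h0 : (0 : EuclideanSpace ℝ (Fin d)) ∈ interior P) : 0 < bboxDiam P := by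
  obtain ⟨ε, hε, hball⟩ := Metric.mem_nhds_iff.mp (mem_interior_iff_mem_nhds.mp h0)
  set i : Fin d := ⟨0, hd⟩
  set x : EuclideanSpace ℝ (Fin d) := EuclideanSpace.single i (ε/2) with hx
  have hxmem : x ∈ P := hball (by
    rw [Metric.mem_ball, dist_zero_right, hx, EuclideanSpace.norm_single]
    rw [Real.norm_eq_abs, abs_of_pos (by linarith)]; linarith)
  have hxmem' : -x ∈ P := hball (by
    rw [Metric.mem_ball, dist_zero_right, norm_neg, hx, EuclideanSpace.norm_single]
    rw [Real.norm_eq_abs, abs_of_pos (by linarith)]; linarith)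
  have h1 : ε/2 ≤ bboxUpper P i := by
    have := le_bboxUpper hP hxmem i
    simpa [hx, EuclideanSpace.single_apply] using this
  have h2 : bboxLower P i ≤ -(ε/2) := by
    have := bboxLower_le hP hxmem' i
    simpa [hx, PiLp.neg_apply, EuclideanSpace.single_apply] using this
  have h3 : ε ≤ (bboxUpper P - bboxLower P) i := by
    have : (bboxUpper P - bboxLower P) i = bboxUpper P i - bboxLower P i := by
      simp [PiLp.sub_apply]
    rw [this]; linarith
  have h4 : |(bboxUpper P - bboxLower P) i| ≤ ‖bboxUpper P - bboxLower P‖ :=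
    coord_abs_le_norm _ i
  unfold bboxDiam
  have : ε ≤ |(bboxUpper P - bboxLower P) i| := le_trans h3 (le_abs_self _)
  linarith

end Helpers

/-- **Approximation by reference points.**
For convex bodies `P, Q ⊆ ℝ^d` with `0` in their interiors, setting
`ᾱ := D(Q)/D(P)` and `c̄ := r(Q) − ᾱ·r(P)`, one has
`δ₂(ᾱP + c̄, Q) ≤ (3√d + 1) · δ_H(P,Q)`. -/
theorem reference_point_approximation
    (d : ℕ) (P Q : Set (EuclideanSpace ℝ (Fin d)))
    (hPc : IsCompact P) (hQc : IsCompact Q)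
    (hPconv : Convex ℝ P) (hQconv : Convex ℝ Q)
    (h0P : (0 : EuclideanSpace ℝ (Fin d)) ∈ interior P)
    (h0Q : (0 : EuclideanSpace ℝ (Fin d)) ∈ interior Q) :
    Metric.hausdorffDist
        ((fun p => (bboxDiam Q / bboxDiam P) • p
            + (bboxLower Q - (bboxDiam Q / bboxDiam P) • bboxLower P)) '' P) Q
      ≤ (3 * Real.sqrt d + 1) * deltaH P Q := by
  have hPne : P.Nonempty := ⟨0, interior_subset h0P⟩
  have hQne : Q.Nonempty := ⟨0, interior_subset h0Q⟩
  have hsd : 0 ≤ Real.sqrt d := Real.sqrt_nonneg _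
  have hKpos : (0:ℝ) < 3 * Real.sqrt d + 1 := by linarith
  set S := {ρ : ℝ | ∃ α : ℝ, 0 < α ∧ ∃ c : EuclideanSpace ℝ (Fin d),
    ρ = hausdorffDist ((fun a => α • a + c) '' P) Q} with hSdef
  have hSne : S.Nonempty :=
    ⟨hausdorffDist ((fun a => (1:ℝ) • a + 0) '' P) Q, 1, one_pos, 0, rfl⟩
  have hS0 : ∀ ρ ∈ S, 0 ≤ ρ := by
    rintro ρ ⟨α, hα, c, rfl⟩; exact hausdorffDist_nonneg
  have hdelta : deltaH P Q = sInf S := rfl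
  rcases Nat.eq_zero_or_pos d with hd | hd
  · subst hd
    have hx0 : ∀ x : EuclideanSpace ℝ (Fin 0), x = 0 := fun x => PiLp.ext fun i => i.elim0
    have h1 : ((fun p => (bboxDiam Q / bboxDiam P) • p
        + (bboxLower Q - (bboxDiam Q / bboxDiam P) • bboxLower P)) '' P) = Q := by
      ext y
      constructor
      · intro _; rw [hx0 y]; exact interior_subset h0Q
      · intro _
        refine ⟨0, interior_subset h0P, ?_⟩
        rw [hx0 y]
        exact hx0 _
    rw [h1, hausdorffDist_self_zero]
    have h2 : 0 ≤ sInf S := le_csInf hSne hS0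
    rw [hdelta]
    positivity
  have key : ∀ ρ ∈ S, hausdorffDist
      ((fun p => (bboxDiam Q / bboxDiam P) • p
          + (bboxLower Q - (bboxDiam Q / bboxDiam P) • bboxLower P)) '' P) Q
      ≤ (3 * Real.sqrt d + 1) * ρ := by
    rintro ρ ⟨α, hα, c, rfl⟩
    set A := (fun a => α • a + c) '' P with hAdef
    have hAc : IsCompact A := hPc.image ((continuous_id.const_smul α).add continuous_const)
    have hAne : A.Nonempty := hPne.image _
    have hρ0 : (0:ℝ) ≤ hausdorffDist A Q := hausdorffDist_nonneg
    have hDP : 0 < bboxDiam P := bboxDiam_pos hd hPc h0P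
    have hDQ : 0 < bboxDiam Q := bboxDiam_pos hd hQc h0Q
    have hrA : bboxLower A = α • bboxLower P + c := bboxLower_affine hPc hPne hα c
    have huA : bboxUpper A = α • bboxUpper P + c := bboxUpper_affine hPc hPne hα c
    have hDA : bboxDiam A = α * bboxDiam P := bboxDiam_affine hPc hPne hα c
    have hDApos : 0 < bboxDiam A := by rw [hDA]; positivity
    set β := bboxDiam Q / bboxDiam A with hβdef
    have hβpos : 0 < β := div_pos hDQ hDApos
    set t := bboxLower Q - β • bboxLower A with htdef
    have hβα : β * α = bboxDiam Q / bboxDiam P := by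
      rw [hβdef, hDA]; field_simp
    have himg : ((fun p => (bboxDiam Q / bboxDiam P) • p
        + (bboxLower Q - (bboxDiam Q / bboxDiam P) • bboxLower P)) '' P)
        = (fun x => β • x + t) '' A := by
      rw [hAdef, Set.image_image]
      apply Set.image_congr
      intro p _
      rw [← hβα, htdef, hrA]
      module
    rw [himg]
    set Bimg := (fun x => β • x + t) '' A with hBdef
    have hBc : IsCompact Bimg := hAc.image ((continuous_id.const_smul β).add continuous_const)
    have hBne : Bimg.Nonempty := hAne.image _
    have hBAtop : EMetric.hausdorffEdist Bimg A ≠ ⊤ :=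
      hausdorffEdist_ne_top_of_nonempty_of_bounded hBne hAne hBc.isBounded hAc.isBounded
    have htri : hausdorffDist Bimg Q ≤ hausdorffDist Bimg A + hausdorffDist A Q :=
      hausdorffDist_triangle hBAtop
    set M := |β - 1| * bboxDiam A + ‖bboxLower Q - bboxLower A‖ with hMdef
    have hM0 : 0 ≤ M :=
      add_nonneg (mul_nonneg (abs_nonneg _) (norm_nonneg _)) (norm_nonneg _)
    have hdist : ∀ a ∈ A, dist (β • a + t) a ≤ M := by
      intro a ha
      rw [dist_eq_norm]
      have hid : β • a + t - a = (β - 1) • (a - bboxLower A)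
          + (bboxLower Q - bboxLower A) := by
        rw [htdef]; module
      rw [hid]
      calc ‖(β - 1) • (a - bboxLower A) + (bboxLower Q - bboxLower A)‖
          ≤ ‖(β - 1) • (a - bboxLower A)‖ + ‖bboxLower Q - bboxLower A‖ := norm_add_le _ _
        _ ≤ M := by
            rw [hMdef, norm_smul, Real.norm_eq_abs]
            gcongr
            exact norm_sub_bboxLower_le hAc ha
    have hBA : hausdorffDist Bimg A ≤ M := by
      apply hausdorffDist_le_of_mem_dist hM0
      · rintro x ⟨a, ha, rfl⟩; exact ⟨a, ha, hdist a ha⟩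
      · intro a ha; exact ⟨β • a + t, ⟨a, ha, rfl⟩, by rw [dist_comm]; exact hdist a ha⟩
    -- bound the two pieces of M
    have h1 : |β - 1| * bboxDiam A = |bboxDiam Q - bboxDiam A| := by
      have h : (β - 1) * bboxDiam A = bboxDiam Q - bboxDiam A := by
        rw [hβdef]; field_simp
      rw [← h, abs_mul, abs_of_pos hDApos]
    have h2 : |bboxDiam Q - bboxDiam A|
        ≤ ‖(bboxUpper Q - bboxLower Q) - (bboxUpper A - bboxLower A)‖ :=
      abs_norm_sub_norm_le _ _
    have h3 : ‖(bboxUpper Q - bboxLower Q) - (bboxUpper A - bboxLower A)‖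
        ≤ ‖bboxUpper Q - bboxUpper A‖ + ‖bboxLower Q - bboxLower A‖ := by
      have e : (bboxUpper Q - bboxLower Q) - (bboxUpper A - bboxLower A)
          = (bboxUpper Q - bboxUpper A) - (bboxLower Q - bboxLower A) := by module
      rw [e]; exact norm_sub_le _ _
    have h4 : ‖bboxUpper Q - bboxUpper A‖ ≤ Real.sqrt d * hausdorffDist A Q := by
      have := bboxUpper_norm_sub hQc hQne hAc hAne
      rwa [hausdorffDist_comm] at this
    have h5 : ‖bboxLower Q - bboxLower A‖ ≤ Real.sqrt d * hausdorffDist A Q := by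
      have := bboxLower_norm_sub hQc hQne hAc hAne
      rwa [hausdorffDist_comm] at this
    have hMle : M ≤ 3 * Real.sqrt d * hausdorffDist A Q := by
      rw [hMdef, h1]; nlinarith
    calc hausdorffDist Bimg Q ≤ hausdorffDist Bimg A + hausdorffDist A Q := htri
      _ ≤ M + hausdorffDist A Q := by linarith
      _ ≤ (3 * Real.sqrt d + 1) * hausdorffDist A Q := by nlinarith
  have hdivle : Metric.hausdorffDist
      ((fun p => (bboxDiam Q / bboxDiam P) • p
          + (bboxLower Q - (bboxDiam Q / bboxDiam P) • bboxLower P)) '' P) Q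
      / (3 * Real.sqrt d + 1) ≤ sInf S :=
    le_csInf hSne fun ρ hρ => by
      rw [div_le_iff₀ hKpos]
      calc _ ≤ (3 * Real.sqrt d + 1) * ρ := key ρ hρ
        _ = ρ * (3 * Real.sqrt d + 1) := mul_comm _ _
  rw [hdelta]
  rw [div_le_iff₀ hKpos] at hdivle
  linarith [hdivle]
end

section
/- Let P, Q ⊆ ℝ^d (Euclidean) be nonempty compact convex sets. Then the objective function of the homothetic Hausdorff matching problem, F : (0,∞) × ℝ^d → [0,∞), F(α,c) := δ₂(αP + c, Q), is convex on (0,∞) × ℝ^d. -/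
open Metric Set

private lemma dist_combo {E : Type*} [NormedAddCommGroup E] [NormedSpace ℝ E]
    (a b c e : E) {t s : ℝ} (ht : 0 ≤ t) (hs : 0 ≤ s) :
    dist (t • a + s • b) (t • c + s • e) ≤ t * dist a c + s * dist b e := by
  have h : (t • a + s • b) - (t • c + s • e) = t • (a - c) + s • (b - e) := by
    module
  simp only [dist_eq_norm, h]
  calc ‖t • (a - c) + s • (b - e)‖ ≤ ‖t • (a - c)‖ + ‖s • (b - e)‖ := norm_add_le _ _
    _ = t * ‖a - c‖ + s * ‖b - e‖ := by
        rw [norm_smul, norm_smul, Real.norm_of_nonneg ht, Real.norm_of_nonneg hs]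

/-- **Convexity of the objective function of the homothetic Hausdorff matching problem.**
Let `P, Q ⊆ ℝ^d` be nonempty compact convex sets. Then
`F(α,c) := δ₂(αP + c, Q)` is convex on `(0,∞) × ℝ^d`. -/
theorem convexOn_hausdorffDist_homothet
    (d : ℕ) (P Q : Set (EuclideanSpace ℝ (Fin d)))
    (hPne : P.Nonempty) (hQne : Q.Nonempty)
    (hPc : IsCompact P) (hQc : IsCompact Q)
    (hPconv : Convex ℝ P) (hQconv : Convex ℝ Q) :
    ConvexOn ℝ ((Set.Ioi (0 : ℝ)) ×ˢ (Set.univ : Set (EuclideanSpace ℝ (Fin d))))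
      (fun ac : ℝ × EuclideanSpace ℝ (Fin d) =>
        Metric.hausdorffDist ((fun p => ac.1 • p + ac.2) '' P) Q) := by
  have himg : ∀ (α : ℝ) (c : EuclideanSpace ℝ (Fin d)),
      IsCompact ((fun p => α • p + c) '' P) := fun α c =>
    hPc.image (by fun_prop)
  have hfin : ∀ (α : ℝ) (c : EuclideanSpace ℝ (Fin d)),
      EMetric.hausdorffEdist ((fun p => α • p + c) '' P) Q ≠ ⊤ := fun α c =>
    Metric.hausdorffEdist_ne_top_of_nonempty_of_bounded (hPne.image _) hQne
      (himg α c).isBounded hQc.isBounded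
  refine ⟨(convex_Ioi 0).prod convex_univ, ?_⟩
  rintro ⟨α₁, c₁⟩ ⟨hα₁, -⟩ ⟨α₂, c₂⟩ ⟨hα₂, -⟩ t s ht hs hts
  simp only [Set.mem_Ioi] at hα₁ hα₂
  simp only [Prod.fst, Prod.snd, Prod.smul_mk, Prod.mk_add_mk, smul_eq_mul]
  set α : ℝ := t * α₁ + s * α₂ with hα
  set c : EuclideanSpace ℝ (Fin d) := t • c₁ + s • c₂ with hc
  have hαpos : 0 < α := by
    rcases (by by_contra h; push_neg at h; obtain ⟨h1, h2⟩ := h; nlinarith : 0 < t ∨ 0 < s) with h | h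
    · nlinarith [mul_pos h hα₁, mul_nonneg hs hα₂.le]
    · nlinarith [mul_pos h hα₂, mul_nonneg ht hα₁.le]
  set F₁ := Metric.hausdorffDist ((fun p => α₁ • p + c₁) '' P) Q with hF₁
  set F₂ := Metric.hausdorffDist ((fun p => α₂ • p + c₂) '' P) Q with hF₂
  have hr : (0 : ℝ) ≤ t * F₁ + s * F₂ := by
    have := Metric.hausdorffDist_nonneg (s := (fun p => α₁ • p + c₁) '' P) (t := Q)
    have := Metric.hausdorffDist_nonneg (s := (fun p => α₂ • p + c₂) '' P) (t := Q)
    positivity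
  refine Metric.hausdorffDist_le_of_infDist hr ?_ ?_
  · -- points of αP + c are close to Q
    rintro x ⟨p, hp, rfl⟩
    obtain ⟨q₁, hq₁, hd₁⟩ := hQc.exists_infDist_eq_dist hQne (α₁ • p + c₁)
    obtain ⟨q₂, hq₂, hd₂⟩ := hQc.exists_infDist_eq_dist hQne (α₂ • p + c₂)
    have hqmem : t • q₁ + s • q₂ ∈ Q := hQconv hq₁ hq₂ ht hs hts
    have key : α • p + c = t • (α₁ • p + c₁) + s • (α₂ • p + c₂) := by
      simp only [hα, hc]; module
    calc infDist (α • p + c) Q ≤ dist (α • p + c) (t • q₁ + s • q₂) :=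
          infDist_le_dist_of_mem hqmem
      _ ≤ t * dist (α₁ • p + c₁) q₁ + s * dist (α₂ • p + c₂) q₂ := by
          rw [key]; exact dist_combo _ _ _ _ ht hs
      _ ≤ t * F₁ + s * F₂ := by
          have h1 : infDist (α₁ • p + c₁) Q ≤ F₁ :=
            infDist_le_hausdorffDist_of_mem ⟨p, hp, rfl⟩ (hfin α₁ c₁)
          have h2 : infDist (α₂ • p + c₂) Q ≤ F₂ :=
            infDist_le_hausdorffDist_of_mem ⟨p, hp, rfl⟩ (hfin α₂ c₂)
          rw [hd₁] at h1; rw [hd₂] at h2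
          nlinarith
  · -- points of Q are close to αP + c
    intro y hy
    obtain ⟨x₁, ⟨p₁, hp₁, rfl⟩, hd₁⟩ :=
      (himg α₁ c₁).exists_infDist_eq_dist (hPne.image _) y
    obtain ⟨x₂, ⟨p₂, hp₂, rfl⟩, hd₂⟩ :=
      (himg α₂ c₂).exists_infDist_eq_dist (hPne.image _) y
    set p : EuclideanSpace ℝ (Fin d) :=
      α⁻¹ • ((t * α₁) • p₁ + (s * α₂) • p₂) with hpdef
    have hcoeff : t * α₁ / α + s * α₂ / α = 1 := by
      field_simp
      exact hα.symm
    have hpmem : p ∈ P := by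
      have := hPconv hp₁ hp₂ (a := t * α₁ / α) (b := s * α₂ / α)
        (by positivity) (by positivity) hcoeff
      convert this using 1
      simp only [hpdef, smul_add, smul_smul, div_eq_inv_mul]
    have hv : α • p = (t * α₁) • p₁ + (s * α₂) • p₂ := by
      rw [hpdef, smul_smul, mul_inv_cancel₀ hαpos.ne', one_smul]
    have key : α • p + c = t • (α₁ • p₁ + c₁) + s • (α₂ • p₂ + c₂) := by
      rw [hv, hc]; module
    have hyeq : y = t • y + s • y := by
      rw [← add_smul, hts, one_smul]
    calc infDist y ((fun p => α • p + c) '' P)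
        ≤ dist y (α • p + c) := infDist_le_dist_of_mem ⟨p, hpmem, rfl⟩
      _ ≤ t * dist y (α₁ • p₁ + c₁) + s * dist y (α₂ • p₂ + c₂) := by
          rw [key]; nth_rewrite 1 [hyeq]; exact dist_combo _ _ _ _ ht hs
      _ ≤ t * F₁ + s * F₂ := by
          have h1 : infDist y ((fun p => α₁ • p + c₁) '' P) ≤ F₁ := by
            rw [hF₁, hausdorffDist_comm]
            exact infDist_le_hausdorffDist_of_mem hy
              (by rw [EMetric.hausdorffEdist_comm]; exact hfin α₁ c₁)
          have h2 : infDist y ((fun p => α₂ • p + c₂) '' P) ≤ F₂ := by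
            rw [hF₂, hausdorffDist_comm]
            exact infDist_le_hausdorffDist_of_mem hy
              (by rw [EMetric.hausdorffEdist_comm]; exact hfin α₂ c₂)
          rw [hd₁] at h1; rw [hd₂] at h2
          beta_reduce at h1 h2
          nlinarith
end
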